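/- arXiv:2504.16349 — 3 statements merged into one kernel-verified Lean document; each statement's English description precedes it below -/
import Mathlib

section
/- For i.i.d. positive random variables (τ_k) with density ρ satisfying ρ(s) ≤ C̃ s^{κ−1} on [0,T], and for every n ≥ 0, E[(T − T_{N_T})^{η−1} ∏_{k=1}^{N_T} (C ΔT_k^{−θ}) 1_{{N_T = n}}] ≤ (C C̃)ⁿ T^{η + n(κ−θ) − 1} Γ(η) Γ(κ−θ)ⁿ / Γ(η + n(κ−θ)), for any η > 0 and θ < κ. -/
open MeasureTheory ProbabilityTheory
open scoped ENNReal

section auxlemmas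
open Set


private lemma beta_integrable {a b y : ℝ} (ha : 0 < a) (hb : 0 < b) (hy : 0 < y) :
    IntervalIntegrable (fun t : ℝ => t ^ (a - 1) * (y - t) ^ (b - 1)) volume 0 y := by
  have h1 : IntervalIntegrable (fun t : ℝ => t ^ (a - 1) * (y - t) ^ (b - 1)) volume 0 (y / 2) := by
    apply (intervalIntegral.intervalIntegrable_rpow' (by linarith : (-1:ℝ) < a - 1)).mul_continuousOn
    apply ContinuousOn.rpow_const ((continuous_const.sub continuous_id).continuousOn)
    intro t ht
    rw [uIcc_of_le (by linarith : (0:ℝ) ≤ y / 2), mem_Icc] at ht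
    exact Or.inl (by linarith [ht.2] : y - t ≠ 0)
  have h2 : IntervalIntegrable (fun t : ℝ => t ^ (a - 1) * (y - t) ^ (b - 1)) volume (y / 2) y := by
    have base : IntervalIntegrable (fun t : ℝ => t ^ (b - 1)) volume 0 (y / 2) :=
      intervalIntegral.intervalIntegrable_rpow' (by linarith)
    have h3 := (base.comp_sub_left y).mul_continuousOn (g := fun t : ℝ => t ^ (a - 1)) ?_
    · have hy2 : y - y / 2 = y / 2 := by ring
      have hy0 : y - 0 = y := by ring
      rw [hy2, hy0] at h3
      have : (fun t : ℝ => (y - t) ^ (b - 1) * t ^ (a - 1))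
          = fun t : ℝ => t ^ (a - 1) * (y - t) ^ (b - 1) := by
        funext t; ring
      rw [this] at h3
      exact h3.symm
    · apply ContinuousOn.rpow_const continuousOn_id
      intro t ht
      rw [show y - 0 = y by ring, show y - y / 2 = y / 2 by ring, uIcc_comm,
        uIcc_of_le (by linarith : y / 2 ≤ y), mem_Icc] at ht
      exact Or.inl (by simp only [id]; linarith [ht.1])
  exact h1.trans h2

private lemma beta_value {a b y : ℝ} (ha : 0 < a) (hb : 0 < b) (hy : 0 < y) :
    ∫ t in (0:ℝ)..y, t ^ (a - 1) * (y - t) ^ (b - 1)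
      = y ^ (a + b - 1) * (Real.Gamma a * Real.Gamma b / Real.Gamma (a + b)) := by
  have hc := Complex.betaIntegral_scaled (a : ℂ) (b : ℂ) hy
  have hre : (∫ t in (0:ℝ)..y, ((t:ℂ) ^ ((a:ℂ) - 1) * ((y:ℂ) - t) ^ ((b:ℂ) - 1)))
      = ((∫ t in (0:ℝ)..y, t ^ (a - 1) * (y - t) ^ (b - 1) : ℝ) : ℂ) := by
    rw [← intervalIntegral.integral_ofReal]
    refine intervalIntegral.integral_congr fun t ht => ?_
    rw [uIcc_of_le hy.le, mem_Icc] at ht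
    rw [Complex.ofReal_mul, Complex.ofReal_cpow ht.1, Complex.ofReal_cpow (by linarith [ht.2] : (0:ℝ) ≤ y - t)]
    push_cast
    ring
  have hbeta : Complex.betaIntegral (a : ℂ) (b : ℂ)
      = ((Real.Gamma a * Real.Gamma b / Real.Gamma (a + b) : ℝ) : ℂ) := by
    have h := Complex.Gamma_mul_Gamma_eq_betaIntegral
      (s := (a:ℂ)) (t := (b:ℂ)) (by simpa using ha) (by simpa using hb)
    have hab : ((a:ℂ) + b) = ((a + b : ℝ) : ℂ) := by push_cast; ring
    rw [hab, Complex.Gamma_ofReal, Complex.Gamma_ofReal, Complex.Gamma_ofReal] at h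
    have hΓ : (Real.Gamma (a + b) : ℂ) ≠ 0 := by
      exact_mod_cast (Real.Gamma_pos_of_pos (by linarith)).ne'
    field_simp
    rw [Complex.ofReal_div, Complex.ofReal_mul, eq_div_iff hΓ, h]; ring
  rw [hre, hbeta] at hc
  have hpow : ((y:ℂ) ^ ((a:ℂ) + b - 1)) = ((y ^ (a + b - 1) : ℝ) : ℂ) := by
    rw [show ((a:ℂ) + b - 1) = ((a + b - 1 : ℝ) : ℂ) by push_cast; ring, ← Complex.ofReal_cpow hy.le]
  rw [hpow, ← Complex.ofReal_mul] at hc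
  exact_mod_cast hc

private lemma beta_lintegral {a b y : ℝ} (ha : 0 < a) (hb : 0 < b) (hy : 0 < y) :
    ∫⁻ t in Set.Ioo (0:ℝ) y, ENNReal.ofReal (t ^ (a - 1) * (y - t) ^ (b - 1))
      = ENNReal.ofReal (y ^ (a + b - 1) * (Real.Gamma a * Real.Gamma b / Real.Gamma (a + b))) := by
  have hInt : IntegrableOn (fun t : ℝ => t ^ (a - 1) * (y - t) ^ (b - 1)) (Set.Ioo 0 y) volume := by
    have := (beta_integrable ha hb hy)
    rw [intervalIntegrable_iff, uIoc_of_le hy.le] at this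
    exact this.mono_set Set.Ioo_subset_Ioc_self
  have hnn : 0 ≤ᵐ[volume.restrict (Set.Ioo (0:ℝ) y)]
      fun t : ℝ => t ^ (a - 1) * (y - t) ^ (b - 1) := by
    filter_upwards [ae_restrict_mem measurableSet_Ioo] with t ht
    exact mul_nonneg (Real.rpow_nonneg ht.1.le _) (Real.rpow_nonneg (by linarith [ht.2]) _)
  rw [← ofReal_integral_eq_lintegral_ofReal hInt hnn, ← integral_Ioc_eq_integral_Ioo,
    ← intervalIntegral.integral_of_le hy.le, beta_value ha hb hy]


private lemma inner_bound {ρ' : ℝ → ℝ≥0∞} {T C Ctilde κ θ b x : ℝ}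
    (hC : 0 < C) (hCt : 0 < Ctilde) (hκθ : 0 < κ - θ) (hb : 0 < b)
    (hxT : x ≤ T)
    (hρbd : ∀ᵐ t ∂(volume.restrict (Set.Ioc (0:ℝ) T)), ρ' t ≤ ENNReal.ofReal (Ctilde * t ^ (κ - 1)))
    {s : ℝ} (hs : 0 ≤ s) :
    ∫⁻ t, ρ' t * (ENNReal.ofReal (C * t ^ (-θ)) * (Set.Ioi (0:ℝ)).indicator 1 t
        * (Set.Ico (0:ℝ) x).indicator (fun u => ENNReal.ofReal ((x - u) ^ (b - 1))) (s + t)) ∂volume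
      ≤ ENNReal.ofReal (C * Ctilde * (Real.Gamma (κ - θ) * Real.Gamma b / Real.Gamma (κ - θ + b)))
        * (Set.Ico (0:ℝ) x).indicator (fun u => ENNReal.ofReal ((x - u) ^ (κ - θ + b - 1))) s := by
  have hΓ1 := Real.Gamma_pos_of_pos hκθ
  have hΓ2 := Real.Gamma_pos_of_pos hb
  have hΓ3 := Real.Gamma_pos_of_pos (by linarith : 0 < κ - θ + b)
  by_cases hsx : s < x
  · have hy : 0 < x - s := by linarith
    have hyT : x - s ≤ T := by linarith
    have hstep1 : ∫⁻ t, ρ' t * (ENNReal.ofReal (C * t ^ (-θ)) * (Set.Ioi (0:ℝ)).indicator 1 t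
        * (Set.Ico (0:ℝ) x).indicator (fun u => ENNReal.ofReal ((x - u) ^ (b - 1))) (s + t)) ∂volume
        = ∫⁻ t in Set.Ioo (0:ℝ) (x - s),
            ρ' t * (ENNReal.ofReal (C * t ^ (-θ)) * ENNReal.ofReal ((x - s - t) ^ (b - 1))) ∂volume := by
      rw [← lintegral_indicator measurableSet_Ioo]
      refine lintegral_congr fun t => ?_
      by_cases ht : t ∈ Set.Ioo (0:ℝ) (x - s)
      · rw [Set.indicator_of_mem ht, Set.indicator_of_mem (Set.mem_Ioi.mpr ht.1),
          Set.indicator_of_mem (Set.mem_Ico.mpr ⟨by linarith [ht.1], by linarith [ht.2]⟩)]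
        rw [show x - (s + t) = x - s - t by ring]
        simp only [Pi.one_apply, mul_one]
      · rw [Set.indicator_of_notMem ht]
        rw [Set.mem_Ioo] at ht
        rcases not_and_or.mp ht with h0 | h1
        · rw [Set.indicator_of_notMem (show t ∉ Set.Ioi (0:ℝ) by simpa using h0)]
          simp
        · have h1' : x - s ≤ t := not_lt.mp h1
          rw [Set.indicator_of_notMem (show s + t ∉ Set.Ico (0:ℝ) x by
            intro hmem; have := (Set.mem_Ico.mp hmem).2; linarith)]
          simp
    rw [hstep1]
    have hstep2 : ∫⁻ t in Set.Ioo (0:ℝ) (x - s),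
          ρ' t * (ENNReal.ofReal (C * t ^ (-θ)) * ENNReal.ofReal ((x - s - t) ^ (b - 1))) ∂volume
        ≤ ∫⁻ t in Set.Ioo (0:ℝ) (x - s),
            ENNReal.ofReal (C * Ctilde)
              * ENNReal.ofReal (t ^ (κ - θ - 1) * (x - s - t) ^ (b - 1)) ∂volume := by
      refine lintegral_mono_ae ?_
      filter_upwards [ae_restrict_of_ae_restrict_of_subset
        (fun t ht => ⟨ht.1, le_trans ht.2.le hyT⟩ : Set.Ioo (0:ℝ) (x-s) ⊆ Set.Ioc (0:ℝ) T) hρbd,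
        ae_restrict_mem measurableSet_Ioo] with t hbd ht
      calc ρ' t * (ENNReal.ofReal (C * t ^ (-θ)) * ENNReal.ofReal ((x - s - t) ^ (b - 1)))
          ≤ ENNReal.ofReal (Ctilde * t ^ (κ - 1))
            * (ENNReal.ofReal (C * t ^ (-θ)) * ENNReal.ofReal ((x - s - t) ^ (b - 1))) :=
            mul_le_mul_left hbd _
        _ = ENNReal.ofReal (C * Ctilde) * ENNReal.ofReal (t ^ (κ - θ - 1) * (x - s - t) ^ (b - 1)) := by
            rw [← ENNReal.ofReal_mul (mul_nonneg hC.le (Real.rpow_nonneg ht.1.le _)),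
              ← ENNReal.ofReal_mul (mul_nonneg hCt.le (Real.rpow_nonneg ht.1.le _)),
              ← ENNReal.ofReal_mul (mul_nonneg hC.le hCt.le)]
            congr 1
            rw [show κ - θ - 1 = (κ - 1) + (-θ) by ring, Real.rpow_add ht.1]
            ring
    refine le_trans hstep2 ?_
    rw [lintegral_const_mul' _ _ ENNReal.ofReal_ne_top, beta_lintegral hκθ hb hy,
      Set.indicator_of_mem (Set.mem_Ico.mpr ⟨hs, hsx⟩),
      ← ENNReal.ofReal_mul (mul_nonneg hC.le hCt.le),
      ← ENNReal.ofReal_mul (by positivity : (0:ℝ) ≤ C * Ctilde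
        * (Real.Gamma (κ - θ) * Real.Gamma b / Real.Gamma (κ - θ + b)))]
    apply ENNReal.ofReal_le_ofReal
    apply le_of_eq
    ring
  · have hz : ∀ t : ℝ, ρ' t * (ENNReal.ofReal (C * t ^ (-θ)) * (Set.Ioi (0:ℝ)).indicator 1 t
        * (Set.Ico (0:ℝ) x).indicator (fun u => ENNReal.ofReal ((x - u) ^ (b - 1))) (s + t)) = 0 := by
      intro t
      by_cases ht : 0 < t
      · have hxs : x ≤ s := not_lt.mp hsx
        rw [Set.indicator_of_notMem (show s + t ∉ Set.Ico (0:ℝ) x by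
          intro hmem; have := (Set.mem_Ico.mp hmem).2; linarith)]
        simp
      · rw [Set.indicator_of_notMem (show t ∉ Set.Ioi (0:ℝ) by simpa using ht)]
        simp
    calc ∫⁻ t, ρ' t * (ENNReal.ofReal (C * t ^ (-θ)) * (Set.Ioi (0:ℝ)).indicator 1 t
          * (Set.Ico (0:ℝ) x).indicator (fun u => ENNReal.ofReal ((x - u) ^ (b - 1))) (s + t)) ∂volume
        = 0 := by simp only [hz]; exact lintegral_zero
      _ ≤ _ := bot_le

private lemma key_ind {Ω : Type*} [MeasurableSpace Ω] (P : Measure Ω) [IsProbabilityMeasure P]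
    (T : ℝ) (hT : 0 < T) (τ : ℕ → Ω → ℝ) (hmeas : ∀ k, Measurable (τ k))
    (hindep : iIndepFun τ P)
    (ρ' : ℝ → ℝ≥0∞) (hρ'm : Measurable ρ')
    (hlaw' : ∀ k, P.map (τ k) = volume.withDensity ρ')
    {Ctilde κ C θ : ℝ} (hCtilde : 0 < Ctilde) (hC : 0 < C) (hκθ : 0 < κ - θ)
    (hρbd : ∀ᵐ t ∂(volume.restrict (Set.Ioc (0:ℝ) T)), ρ' t ≤ ENNReal.ofReal (Ctilde * t ^ (κ - 1))) :
    ∀ (m : ℕ) (b : ℝ), 0 < b → ∀ x : ℝ, 0 < x → x ≤ T →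
    ∫⁻ ω, (∏ k ∈ Finset.Icc 1 m,
          (ENNReal.ofReal (C * τ k ω ^ (-θ)) * (Set.Ioi (0:ℝ)).indicator 1 (τ k ω)))
        * (Set.Ico (0:ℝ) x).indicator (fun u => ENNReal.ofReal ((x - u) ^ (b - 1)))
            (∑ k ∈ Finset.Icc 1 m, τ k ω) ∂P
      ≤ ENNReal.ofReal ((C * Ctilde) ^ m * x ^ (b + m * (κ - θ) - 1)
          * Real.Gamma b * Real.Gamma (κ - θ) ^ m / Real.Gamma (b + m * (κ - θ))) := by
  intro m
  induction m with
  | zero =>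
    intro b hb x hx hxT
    have hΓ : Real.Gamma b ≠ 0 := (Real.Gamma_pos_of_pos hb).ne'
    have hIcc : Finset.Icc 1 0 = (∅ : Finset ℕ) := by decide
    simp only [hIcc, Finset.prod_empty, Finset.sum_empty, one_mul]
    rw [Set.indicator_of_mem (Set.mem_Ico.mpr ⟨le_refl _, hx⟩), lintegral_const, measure_univ,
      mul_one]
    apply le_of_eq
    congr 1
    rw [sub_zero]
    push_cast
    field_simp
    simp only [Nat.cast_zero, zero_mul, add_zero]
  | succ m ih =>
    intro b hb x hx hxT
    have hb' : 0 < κ - θ + b := by linarith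
    -- abbreviations
    set W : Ω → ℝ≥0∞ := fun ω => ∏ k ∈ Finset.Icc 1 m,
      (ENNReal.ofReal (C * τ k ω ^ (-θ)) * (Set.Ioi (0:ℝ)).indicator 1 (τ k ω)) with hWdef
    set S : Ω → ℝ := fun ω => ∑ k ∈ Finset.Icc 1 m, τ k ω with hSdef
    have hWm : Measurable W := by
      apply Finset.measurable_prod
      intro k _
      apply Measurable.mul
      · exact Measurable.ennreal_ofReal (by fun_prop)
      · exact (measurable_one.indicator measurableSet_Ioi).comp (hmeas k)
    have hSm : Measurable S := Finset.measurable_sum _ fun k _ => hmeas k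
    set g : ℝ → ℝ → ℝ≥0∞ := fun c u =>
      (Set.Ico (0:ℝ) x).indicator (fun u => ENNReal.ofReal ((x - u) ^ (c - 1))) u with hgdef
    have hgm : ∀ c, Measurable (g c) := fun c =>
      Measurable.indicator (Measurable.ennreal_ofReal (by fun_prop)) measurableSet_Ico
    set V : Ω → ℝ × ℝ≥0∞ := fun ω => (S ω, W ω) with hVdef
    have hVm : Measurable V := hSm.prodMk hWm
    set base : ℝ × ℝ≥0∞ → ℝ → ℝ≥0∞ := fun v t =>
      ENNReal.ofReal (C * t ^ (-θ)) * (Set.Ioi (0:ℝ)).indicator 1 t * g b (v.1 + t)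
      with hbasedef
    have hbasem : ∀ v, Measurable (base v) := by
      intro v
      apply Measurable.mul
      · exact (Measurable.ennreal_ofReal (by fun_prop)).mul
          (measurable_one.indicator measurableSet_Ioi)
      · exact (hgm b).comp (measurable_const.add measurable_id)
    set H : (ℝ × ℝ≥0∞) × ℝ → ℝ≥0∞ := fun p => p.1.2 * base p.1 p.2 with hHdef
    have hHm : Measurable H := by
      apply Measurable.mul (measurable_fst.snd)
      apply Measurable.mul
      · apply Measurable.mul
        · exact Measurable.ennreal_ofReal (by fun_prop)
        · exact (measurable_one.indicator measurableSet_Ioi).comp measurable_snd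
      · exact (hgm b).comp ((measurable_fst.fst).add measurable_snd)
    -- rewrite integrand
    have hEq : ∀ ω, (∏ k ∈ Finset.Icc 1 (m+1),
          (ENNReal.ofReal (C * τ k ω ^ (-θ)) * (Set.Ioi (0:ℝ)).indicator 1 (τ k ω)))
        * g b (∑ k ∈ Finset.Icc 1 (m+1), τ k ω) = H (V ω, τ (m+1) ω) := by
      intro ω
      rw [Finset.prod_Icc_succ_top (Nat.le_add_left 1 m), Finset.sum_Icc_succ_top (Nat.le_add_left 1 m)]
      simp only [hHdef, hbasedef, hVdef, hWdef, hSdef]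
      ring
    -- independence
    have hIndep : IndepFun V (τ (m+1)) P := by
      have hdisj : Disjoint (Finset.Icc 1 m) ({m+1} : Finset ℕ) := by
        simp only [Finset.disjoint_singleton_right, Finset.mem_Icc]
        omega
      have h0 := hindep.indepFun_finset (Finset.Icc 1 m) {m+1} hdisj hmeas
      set φ : ((Finset.Icc 1 m : Finset ℕ) → ℝ) → ℝ × ℝ≥0∞ := fun r =>
        (∑ k, r k, ∏ k, (ENNReal.ofReal (C * r k ^ (-θ)) * (Set.Ioi (0:ℝ)).indicator 1 (r k)))
        with hφdef
      set ψ : (({m+1} : Finset ℕ) → ℝ) → ℝ := fun r => r ⟨m+1, Finset.mem_singleton_self _⟩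
      have hφ : Measurable φ := by
        apply Measurable.prodMk
        · exact Finset.measurable_sum _ fun k _ => measurable_pi_apply k
        · apply Finset.measurable_prod
          intro k _
          exact (Measurable.ennreal_ofReal (by fun_prop)).mul
            ((measurable_one.indicator measurableSet_Ioi).comp (measurable_pi_apply k))
      have hψ : Measurable ψ := measurable_pi_apply _
      have h2 := h0.comp hφ hψ
      have e1 : (φ ∘ fun a (i : (Finset.Icc 1 m : Finset ℕ)) => τ i a) = V := by
        funext a
        simp only [Function.comp, hφdef, hVdef, hSdef, hWdef]
        exact congrArg₂ Prod.mk
          (Finset.sum_coe_sort (Finset.Icc 1 m) (fun k => τ k a))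
          (Finset.prod_coe_sort (Finset.Icc 1 m)
            (fun k => ENNReal.ofReal (C * τ k a ^ (-θ)) * (Set.Ioi (0:ℝ)).indicator 1 (τ k a)))
      have e2 : (ψ ∘ fun a (i : (({m+1} : Finset ℕ) : Finset ℕ)) => τ i a) = τ (m+1) := rfl
      rwa [e1, e2] at h2
    haveI : IsProbabilityMeasure (P.map V) := Measure.isProbabilityMeasure_map hVm.aemeasurable
    haveI : IsProbabilityMeasure (P.map (τ (m+1))) :=
      Measure.isProbabilityMeasure_map (hmeas (m+1)).aemeasurable
    have hmap : P.map (fun ω => (V ω, τ (m+1) ω)) = (P.map V).prod (P.map (τ (m+1))) :=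
      (indepFun_iff_map_prod_eq_prod_map_map hVm.aemeasurable (hmeas (m+1)).aemeasurable).mp hIndep
    set K : ℝ≥0∞ := ENNReal.ofReal (C * Ctilde
      * (Real.Gamma (κ - θ) * Real.Gamma b / Real.Gamma (κ - θ + b))) with hKdef
    have hinner : ∀ v : ℝ × ℝ≥0∞,
        ∫⁻ t, H (v, t) ∂(P.map (τ (m+1)))
          = v.2 * ∫⁻ t, ρ' t * base v t ∂volume := by
      intro v
      rw [show (fun t => H (v, t)) = fun t => v.2 * base v t from rfl,
        lintegral_const_mul _ (hbasem v), hlaw' (m+1),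
        lintegral_withDensity_eq_lintegral_mul volume hρ'm (hbasem v)]
      rfl
    have hae0 : ∀ᵐ v ∂(P.map V), v.1 < 0 → v.2 = 0 := by
      rw [ae_iff]
      have hAset : {v : ℝ × ℝ≥0∞ | ¬(v.1 < 0 → v.2 = 0)} = {v : ℝ × ℝ≥0∞ | v.1 < 0 ∧ v.2 ≠ 0} := by
        ext v; simp [Classical.not_imp]
      rw [hAset, Measure.map_apply hVm (by
        exact (measurable_fst measurableSet_Iio).inter
          (measurable_snd (measurableSet_singleton 0).compl))]
      have hpre : V ⁻¹' {v : ℝ × ℝ≥0∞ | v.1 < 0 ∧ v.2 ≠ 0} = ∅ := by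
        ext ω
        simp only [Set.mem_preimage, Set.mem_setOf_eq, Set.mem_empty_iff_false, iff_false, not_and,
          not_not]
        intro hneg
        by_contra hne
        have hpos : ∀ k ∈ Finset.Icc 1 m, 0 < τ k ω := by
          intro k hk
          have hfac := Finset.prod_ne_zero_iff.mp hne k hk
          by_contra hno
          rw [Set.indicator_of_notMem (show τ k ω ∉ Set.Ioi (0:ℝ) by simpa using hno), mul_zero]
            at hfac
          exact hfac rfl
        have : 0 ≤ S ω := Finset.sum_nonneg fun k hk => (hpos k hk).le
        exact absurd hneg (not_lt.mpr this)
      rw [hpre, measure_empty]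
    calc ∫⁻ ω, (∏ k ∈ Finset.Icc 1 (m+1),
          (ENNReal.ofReal (C * τ k ω ^ (-θ)) * (Set.Ioi (0:ℝ)).indicator 1 (τ k ω)))
        * g b (∑ k ∈ Finset.Icc 1 (m+1), τ k ω) ∂P
        = ∫⁻ ω, H (V ω, τ (m+1) ω) ∂P := lintegral_congr hEq
      _ = ∫⁻ p, H p ∂(P.map (fun ω => (V ω, τ (m+1) ω))) :=
          (lintegral_map hHm (hVm.prodMk (hmeas (m+1)))).symm
      _ = ∫⁻ v, ∫⁻ t, H (v, t) ∂(P.map (τ (m+1))) ∂(P.map V) := by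
          rw [hmap, lintegral_prod _ hHm.aemeasurable]
      _ = ∫⁻ v, v.2 * ∫⁻ t, ρ' t * base v t ∂volume ∂(P.map V) := lintegral_congr hinner
      _ ≤ ∫⁻ v, K * (v.2 * g (κ - θ + b) v.1) ∂(P.map V) := by
          apply lintegral_mono_ae
          filter_upwards [hae0] with v hv
          rcases le_or_gt 0 v.1 with h1 | h1
          · calc v.2 * ∫⁻ t, ρ' t * base v t ∂volume
                ≤ v.2 * (K * g (κ - θ + b) v.1) :=
                  mul_le_mul_right (inner_bound hC hCtilde hκθ hb hxT hρbd h1) _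
              _ = K * (v.2 * g (κ - θ + b) v.1) := by ring
          · rw [hv h1]
            simp
      _ = K * ∫⁻ v, v.2 * g (κ - θ + b) v.1 ∂(P.map V) :=
          lintegral_const_mul _ (measurable_snd.mul ((hgm _).comp measurable_fst))
      _ = K * ∫⁻ ω, W ω * g (κ - θ + b) (S ω) ∂P := by
          have hlm := lintegral_map (μ := P) (g := V)
            (f := fun v : ℝ × ℝ≥0∞ => v.2 * g (κ - θ + b) v.1)
            (measurable_snd.mul ((hgm _).comp measurable_fst)) hVm
          rw [hlm]
      _ ≤ K * ENNReal.ofReal ((C * Ctilde) ^ m * x ^ (κ - θ + b + m * (κ - θ) - 1)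
            * Real.Gamma (κ - θ + b) * Real.Gamma (κ - θ) ^ m
            / Real.Gamma (κ - θ + b + m * (κ - θ))) :=
          mul_le_mul_right (ih (κ - θ + b) hb' x hx hxT) K
      _ ≤ _ := by
          rw [hKdef, ← ENNReal.ofReal_mul (by positivity)]
          apply ENNReal.ofReal_le_ofReal
          apply le_of_eq
          have hΓ1 := Real.Gamma_pos_of_pos hκθ
          have hΓ2 := Real.Gamma_pos_of_pos hb
          have hΓ3 := Real.Gamma_pos_of_pos hb'
          have hΓ4 := Real.Gamma_pos_of_pos (show 0 < b + (m+1:ℕ) * (κ - θ) by push_cast; nlinarith)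
          have he : κ - θ + b + m * (κ - θ) = b + (m+1:ℕ) * (κ - θ) := by push_cast; ring
          rw [show κ - θ + b + m * (κ - θ) - 1 = b + (m+1:ℕ) * (κ - θ) - 1 by rw [he], he]
          field_simp
          ring

end auxlemmas

/-- The random time grid `T₀ = 0`, `T_k = (T_{k-1} + τ_k) ∧ T`. -/
noncomputable def Tgrid {Ω : Type*} (T : ℝ) (τ : ℕ → Ω → ℝ) : ℕ → Ω → ℝ
  | 0 => fun _ => 0
  | k + 1 => fun ω => min (Tgrid T τ k ω + τ (k + 1) ω) T

/-- `N_T = max{k ≥ 0 : T_k < T}`, the number of grid points in `[0,T)`. -/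
noncomputable def NT {Ω : Type*} (T : ℝ) (τ : ℕ → Ω → ℝ) (ω : Ω) : ℕ :=
  sSup {k : ℕ | Tgrid T τ k ω < T}

private lemma ptwise {Ω : Type*} (T : ℝ) (hT : 0 < T) (τ : ℕ → Ω → ℝ)
    (C η θ : ℝ) (hC : 0 < C) (n : ℕ) :
    ∀ ω, (∀ k, 0 < τ k ω) → NT T τ ω = n →
    ENNReal.ofReal ((T - Tgrid T τ (NT T τ ω) ω) ^ (η - 1)
      * ∏ k ∈ Finset.Icc 1 (NT T τ ω), C * (Tgrid T τ k ω - Tgrid T τ (k - 1) ω) ^ (-θ))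
    ≤ (∏ k ∈ Finset.Icc 1 n,
        (ENNReal.ofReal (C * τ k ω ^ (-θ)) * (Set.Ioi (0:ℝ)).indicator 1 (τ k ω)))
      * (Set.Ico (0:ℝ) T).indicator (fun u => ENNReal.ofReal ((T - u) ^ (η - 1)))
          (∑ k ∈ Finset.Icc 1 n, τ k ω) := by
  have hTg : ∀ ω, (∀ k, 0 < τ k ω) → ∀ j,
      Tgrid T τ j ω = min (∑ k ∈ Finset.Icc 1 j, τ k ω) T := by
    intro ω hpos j
    induction j with
    | zero =>
      show (0:ℝ) = min (∑ k ∈ Finset.Icc 1 0, τ k ω) T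
      rw [show Finset.Icc 1 0 = (∅ : Finset ℕ) by decide, Finset.sum_empty, min_eq_left hT.le]
    | succ j ihj =>
      show min (Tgrid T τ j ω + τ (j+1) ω) T = _
      rw [ihj, Finset.sum_Icc_succ_top (Nat.le_add_left 1 j)]
      rcases le_or_gt (∑ k ∈ Finset.Icc 1 j, τ k ω) T with h | h
      · rw [min_eq_left h]
      · rw [min_eq_right h.le, min_eq_right (le_add_of_nonneg_right (hpos (j+1)).le),
          min_eq_right (by linarith [hpos (j+1)])]
  intro ω hpos hNT
  rw [hNT]
  have hgrids := hTg ω hpos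
  have hnn : ∀ j, (0:ℝ) ≤ ∑ k ∈ Finset.Icc 1 j, τ k ω :=
    fun j => Finset.sum_nonneg fun k _ => (hpos k).le
  have hmono : ∀ {i j : ℕ}, i ≤ j →
      (∑ k ∈ Finset.Icc 1 i, τ k ω) ≤ ∑ k ∈ Finset.Icc 1 j, τ k ω := fun {i j} hij =>
    Finset.sum_le_sum_of_subset_of_nonneg (Finset.Icc_subset_Icc_right hij)
      (fun k _ _ => (hpos k).le)
  cases n with
  | zero =>
    rw [show Tgrid T τ 0 ω = 0 from rfl, show Finset.Icc 1 0 = (∅:Finset ℕ) by decide]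
    simp only [Finset.prod_empty, Finset.sum_empty, mul_one, one_mul, sub_zero]
    rw [Set.indicator_of_mem (Set.mem_Ico.mpr ⟨le_refl _, hT⟩), sub_zero]
  | succ m =>
    have hAne : ({k | Tgrid T τ k ω < T} : Set ℕ).Nonempty :=
      ⟨0, by show Tgrid T τ 0 ω < T; rw [show Tgrid T τ 0 ω = 0 from rfl]; exact hT⟩
    have hbdd : BddAbove {k | Tgrid T τ k ω < T} := by
      by_contra hnb
      have hinf : ({k | Tgrid T τ k ω < T} : Set ℕ).Infinite := by
        by_contra hfin
        exact hnb ((Set.not_infinite.mp hfin).bddAbove)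
      have h0 : NT T τ ω = 0 := Set.Infinite.Nat.sSup_eq_zero hinf
      omega
    have hmem : (m+1) ∈ {k | Tgrid T τ k ω < T} := by
      rw [← hNT]; exact Nat.sSup_mem hAne hbdd
    have hSlt : (∑ k ∈ Finset.Icc 1 (m+1), τ k ω) < T := by
      have h := hmem
      simp only [Set.mem_setOf_eq, hgrids (m+1)] at h
      rcases min_lt_iff.mp h with h' | h'
      · exact h'
      · exact absurd h' (lt_irrefl T)
    have hTgeq : ∀ j, j ≤ m+1 → Tgrid T τ j ω = ∑ k ∈ Finset.Icc 1 j, τ k ω := by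
      intro j hj
      rw [hgrids j]
      exact min_eq_left (le_of_lt (lt_of_le_of_lt (hmono hj) hSlt))
    have hprod : ∀ k ∈ Finset.Icc 1 (m+1),
        C * (Tgrid T τ k ω - Tgrid T τ (k-1) ω) ^ (-θ) = C * τ k ω ^ (-θ) := by
      intro k hk
      rw [Finset.mem_Icc] at hk
      obtain ⟨j, rfl⟩ : ∃ j, k = j + 1 := ⟨k - 1, by omega⟩
      rw [hTgeq (j+1) hk.2, hTgeq ((j+1)-1) (by omega)]
      simp only [Nat.add_sub_cancel]
      rw [Finset.sum_Icc_succ_top (Nat.le_add_left 1 j)]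
      ring_nf
    rw [Finset.prod_congr rfl hprod, hTgeq (m+1) le_rfl,
      Set.indicator_of_mem (Set.mem_Ico.mpr ⟨hnn _, hSlt⟩),
      ENNReal.ofReal_mul (Real.rpow_nonneg (by linarith [hSlt]) _),
      ENNReal.ofReal_prod_of_nonneg
        (fun i _ => mul_nonneg hC.le (Real.rpow_nonneg (hpos i).le _))]
    apply le_of_eq
    have hWsimp : (∏ k ∈ Finset.Icc 1 (m+1),
          (ENNReal.ofReal (C * τ k ω ^ (-θ)) * (Set.Ioi (0:ℝ)).indicator 1 (τ k ω)))
        = ∏ k ∈ Finset.Icc 1 (m+1), ENNReal.ofReal (C * τ k ω ^ (-θ)) :=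
      Finset.prod_congr rfl fun k _ => by
        rw [Set.indicator_of_mem (Set.mem_Ioi.mpr (hpos k))]
        simp
    rw [hWsimp]
    exact mul_comm _ _

/-- For i.i.d. positive random variables `(τ_k)` with density `ρ` satisfying
`ρ(s) ≤ C̃ s^{κ−1}` on `[0,T]`, and for every `n ≥ 0`,
`E[(T − T_{N_T})^{η−1} ∏_{k=1}^{N_T} (C ΔT_k^{−θ}) 1_{{N_T = n}}]
  ≤ (C C̃)ⁿ T^{η + n(κ−θ) − 1} Γ(η) Γ(κ−θ)ⁿ / Γ(η + n(κ−θ))`,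
for any `η > 0` and `θ < κ`. -/
theorem stmt6 {Ω : Type*} [MeasurableSpace Ω] (P : Measure Ω) [IsProbabilityMeasure P]
    (T : ℝ) (hT : 0 < T) (τ : ℕ → Ω → ℝ) (hmeas : ∀ k, Measurable (τ k))
    (hindep : iIndepFun τ P)
    (ρ : ℝ → ℝ) (hρ_nonneg : ∀ s, 0 ≤ ρ s) (hρ_supp : ∀ s ≤ (0 : ℝ), ρ s = 0)
    (hlaw : ∀ k, Measure.map (τ k) P
      = MeasureTheory.volume.withDensity (fun s => ENNReal.ofReal (ρ s)))
    (Ctilde κ : ℝ) (hCtilde : 0 < Ctilde) (hκ : 0 < κ)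
    (hρ_bound : ∀ s ∈ Set.Icc (0 : ℝ) T, ρ s ≤ Ctilde * s ^ (κ - 1))
    (C η θ : ℝ) (hC : 0 < C) (hη : 0 < η) (hθ : θ < κ) (n : ℕ) :
    ∫⁻ ω in {ω | NT T τ ω = n}, ENNReal.ofReal
        ((T - Tgrid T τ (NT T τ ω) ω) ^ (η - 1)
          * ∏ k ∈ Finset.Icc 1 (NT T τ ω),
              C * (Tgrid T τ k ω - Tgrid T τ (k - 1) ω) ^ (-θ)) ∂P
      ≤ ENNReal.ofReal
          ((C * Ctilde) ^ n * T ^ (η + n * (κ - θ) - 1)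
            * Real.Gamma η * Real.Gamma (κ - θ) ^ n / Real.Gamma (η + n * (κ - θ))) := by
  classical
  -- a.e. positivity of the τ's
  have hpos_ae : ∀ᵐ ω ∂P, ∀ k, 0 < τ k ω := by
    rw [ae_all_iff]
    intro k
    rw [ae_iff]
    have hset : {ω | ¬ 0 < τ k ω} = τ k ⁻¹' (Set.Iic 0) := by
      ext ω; simp [not_lt]
    rw [hset, ← Measure.map_apply (hmeas k) measurableSet_Iic, hlaw k,
      withDensity_apply _ measurableSet_Iic,
      setLIntegral_congr_fun measurableSet_Iic ((fun s hs => by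
        rw [hρ_supp s hs]; simp : ∀ s ∈ Set.Iic (0:ℝ),
          ENNReal.ofReal (ρ s) = (fun _ => (0:ℝ≥0∞)) s))]
    simp
  -- a measurable version of the density
  set ν : Measure ℝ := volume.withDensity (fun s => ENNReal.ofReal (ρ s)) with hνdef
  haveI : IsProbabilityMeasure ν := by
    rw [← hlaw 0]
    exact Measure.isProbabilityMeasure_map (hmeas 0).aemeasurable
  set ρ' : ℝ → ℝ≥0∞ := ν.rnDeriv volume with hρ'def
  have hρ'm : Measurable ρ' := Measure.measurable_rnDeriv ν volume
  have hνeq : volume.withDensity ρ' = ν :=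
    Measure.withDensity_rnDeriv_eq ν volume (withDensity_absolutelyContinuous _ _)
  have hlaw' : ∀ k, Measure.map (τ k) P = volume.withDensity ρ' := fun k => by
    rw [hlaw k, hνeq]
  have hρbd : ∀ᵐ t ∂(volume.restrict (Set.Ioc (0:ℝ) T)),
      ρ' t ≤ ENNReal.ofReal (Ctilde * t ^ (κ - 1)) := by
    apply ae_le_of_forall_setLIntegral_le_of_sigmaFinite hρ'm
    intro s hs _
    rw [Measure.restrict_restrict hs]
    have hmeas' : MeasurableSet (s ∩ Set.Ioc 0 T) := hs.inter measurableSet_Ioc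
    rw [← withDensity_apply ρ' hmeas', hνeq, hνdef, withDensity_apply _ hmeas']
    apply setLIntegral_mono (Measurable.ennreal_ofReal (by fun_prop))
    intro t ht
    exact ENNReal.ofReal_le_ofReal (hρ_bound t ⟨ht.2.1.le, ht.2.2⟩)
  -- the bound function
  set Wb : Ω → ℝ≥0∞ := fun ω => (∏ k ∈ Finset.Icc 1 n,
      (ENNReal.ofReal (C * τ k ω ^ (-θ)) * (Set.Ioi (0:ℝ)).indicator 1 (τ k ω)))
    * (Set.Ico (0:ℝ) T).indicator (fun u => ENNReal.ofReal ((T - u) ^ (η - 1)))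
        (∑ k ∈ Finset.Icc 1 n, τ k ω) with hWbdef
  have hWbm : Measurable Wb := by
    apply Measurable.mul
    · apply Finset.measurable_prod
      intro k _
      exact (Measurable.ennreal_ofReal (by fun_prop)).mul
        ((measurable_one.indicator measurableSet_Ioi).comp (hmeas k))
    · exact (Measurable.indicator (Measurable.ennreal_ofReal (by fun_prop))
        measurableSet_Ico).comp (Finset.measurable_sum _ fun k _ => hmeas k)
  calc ∫⁻ ω in {ω | NT T τ ω = n}, ENNReal.ofReal
        ((T - Tgrid T τ (NT T τ ω) ω) ^ (η - 1)
          * ∏ k ∈ Finset.Icc 1 (NT T τ ω),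
              C * (Tgrid T τ k ω - Tgrid T τ (k - 1) ω) ^ (-θ)) ∂P
      ≤ ∫⁻ ω in {ω | NT T τ ω = n}, Wb ω ∂P := by
        apply setLIntegral_mono_ae hWbm.aemeasurable
        filter_upwards [hpos_ae] with ω hω hmem
        exact ptwise T hT τ C η θ hC n ω hω hmem
    _ ≤ ∫⁻ ω, Wb ω ∂P := lintegral_mono' Measure.restrict_le_self le_rfl
    _ ≤ ENNReal.ofReal
          ((C * Ctilde) ^ n * T ^ (η + n * (κ - θ) - 1)
            * Real.Gamma η * Real.Gamma (κ - θ) ^ n / Real.Gamma (η + n * (κ - θ))) :=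
        key_ind P T hT τ hmeas hindep ρ' hρ'm hlaw' hCtilde hC (by linarith) hρbd n η hη T hT
          le_rfl
end

section
/- For a Gaussian random variable G with mean μ and standard deviation Σ > 0, E[(G − K)₊] = Σ(φ(d) − d Φ(−d)) where d := (K − μ)/Σ, φ is the standard normal density and Φ the standard normal c.d.f. -/
open MeasureTheory ProbabilityTheory
open scoped ENNReal NNReal

/-- For a Gaussian random variable `G` with mean `μ` and standard deviation
`Σ > 0`, `E[(G − K)₊] = Σ(φ(d) − d Φ(−d))` where `d := (K − μ)/Σ`, `φ` is the
standard normal density and `Φ` the standard normal c.d.f. -/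
theorem stmt11 (μ S K : ℝ) (hS : 0 < S)
    (φ : ℝ → ℝ) (hφ : ∀ x, φ x = Real.exp (-x ^ 2 / 2) / Real.sqrt (2 * Real.pi))
    (Φ : ℝ → ℝ) (hΦ : ∀ x, Φ x = ∫ u in Set.Iic x, φ u)
    (d : ℝ) (hd : d = (K - μ) / S) :
    (∫ x, max (x - K) 0 ∂(gaussianReal μ (Real.toNNReal (S ^ 2))))
      = S * (φ d - d * Φ (-d)) := by
  have hS0 : S ≠ 0 := hS.ne'
  set v : ℝ≥0 := Real.toNNReal (S ^ 2) with hv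
  have hvc : (v : ℝ) = S ^ 2 := Real.coe_toNNReal _ (by positivity)
  have hv0 : v ≠ 0 := by
    intro h
    have : (v : ℝ) = 0 := by rw [h]; simp
    rw [hvc] at this
    exact (by positivity : (0:ℝ) < S ^ 2).ne' this
  -- basic integrability facts
  have hφeq : φ = fun x => Real.exp (-(1/2 : ℝ) * x ^ 2) / Real.sqrt (2 * Real.pi) := by
    funext x; rw [hφ]; ring_nf
  have hIφ : Integrable φ := by
    rw [hφeq]
    exact (integrable_exp_neg_mul_sq (by norm_num : (0:ℝ) < 1/2)).div_const _
  have hIzφ : Integrable (fun z => z * φ z) := by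
    rw [hφeq]
    have := (integrable_mul_exp_neg_mul_sq (by norm_num : (0:ℝ) < 1/2)).div_const
      (Real.sqrt (2 * Real.pi))
    exact this.congr (Filter.Eventually.of_forall fun z => (mul_div_assoc _ _ _))
  -- Step 1: write the integral against Lebesgue measure with the Gaussian density
  have h1 : (∫ x, max (x - K) 0 ∂(gaussianReal μ v))
      = ∫ x, gaussianPDFReal μ v x * max (x - K) 0 := by
    rw [gaussianReal_of_var_ne_zero _ hv0, gaussianPDF_def]
    have heq : (fun x => ENNReal.ofReal (gaussianPDFReal μ v x))
        = (fun x => ((gaussianPDFReal μ v x).toNNReal : ℝ≥0∞)) := rfl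
    rw [heq, integral_withDensity_eq_integral_smul
      ((measurable_gaussianPDFReal μ v).real_toNNReal)]
    congr 1
    funext x
    rw [NNReal.smul_def, Real.coe_toNNReal _ (gaussianPDFReal_nonneg μ v x), smul_eq_mul]
  -- the density at `S * z + μ` equals `φ z / S`
  have hpdf : ∀ z : ℝ, gaussianPDFReal μ v (S * z + μ) = φ z / S := by
    intro z
    rw [gaussianPDFReal, hφ, hvc]
    have hsqrt : Real.sqrt (2 * Real.pi * S ^ 2) = Real.sqrt (2 * Real.pi) * S := by
      rw [Real.sqrt_mul (by positivity), Real.sqrt_sq hS.le]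
    have harg : -(S * z + μ - μ) ^ 2 / (2 * (S:ℝ) ^ 2) = -z ^ 2 / 2 := by
      field_simp; ring
    rw [hsqrt, harg]
    rw [mul_inv, div_div]
    ring
  -- Step 2: change of variables x = S * z + μ
  have h2 : (∫ x, gaussianPDFReal μ v x * max (x - K) 0)
      = S * ∫ z, φ z * max (z - d) 0 := by
    have hcomp : (∫ z, (fun x => gaussianPDFReal μ v x * max (x - K) 0) (S * z + μ))
        = |S⁻¹| • ∫ x, gaussianPDFReal μ v x * max (x - K) 0 := by
      rw [show (fun z : ℝ => (fun x => gaussianPDFReal μ v x * max (x - K) 0) (S * z + μ))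
          = (fun z : ℝ => (fun y => gaussianPDFReal μ v (y + μ) * max (y + μ - K) 0) (S * z))
          from rfl]
      rw [MeasureTheory.Measure.integral_comp_mul_left
        (fun y => gaussianPDFReal μ v (y + μ) * max (y + μ - K) 0) S]
      rw [integral_add_right_eq_self (fun x => gaussianPDFReal μ v x * max (x - K) 0) μ]
    have hval : (fun z : ℝ => (fun x => gaussianPDFReal μ v x * max (x - K) 0) (S * z + μ))
        = fun z => φ z * max (z - d) 0 := by
      funext z
      simp only
      rw [hpdf z]
      have hmax : max (S * z + μ - K) 0 = S * max (z - d) 0 := by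
        rw [mul_max_of_nonneg _ _ hS.le, mul_zero]
        congr 1
        rw [hd]; field_simp; ring
      rw [hmax]
      field_simp
    rw [hval] at hcomp
    rw [abs_of_pos (inv_pos.mpr hS), smul_eq_mul] at hcomp
    have := hcomp.symm
    field_simp at this ⊢
    linarith [this]
  -- Step 3: restrict to `Ioi d`
  have h3 : (∫ z, φ z * max (z - d) 0) = ∫ z in Set.Ioi d, (z * φ z - d * φ z) := by
    rw [← setIntegral_eq_integral_of_forall_compl_eq_zero (s := Set.Ioi d)
      (f := fun z => φ z * max (z - d) 0) ?_]
    · refine setIntegral_congr_fun measurableSet_Ioi fun z hz => ?_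
      have hz' : d < z := hz
      show φ z * max (z - d) 0 = z * φ z - d * φ z
      rw [max_eq_left (by linarith)]
      ring
    · intro x hx
      simp only [Set.mem_Ioi, not_lt] at hx
      show φ x * max (x - d) 0 = 0
      rw [max_eq_right (by linarith)]
      ring
  -- Step 4a: `∫ z in Ioi d, z * φ z = φ d`
  have h4a : (∫ z in Set.Ioi d, z * φ z) = φ d := by
    have hderiv : ∀ z : ℝ, HasDerivAt (fun y => -φ y) (z * φ z) z := by
      intro z
      have h1' : HasDerivAt (fun y : ℝ => -y ^ 2 / 2) (-z) z := by
        have := ((hasDerivAt_pow 2 z).neg).div_const 2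
        simp only [Pi.neg_def] at this
        refine this.congr_deriv ?_
        simp; ring
      have h2' := h1'.exp
      have h3' := (h2'.div_const (Real.sqrt (2 * Real.pi))).neg
      have : (fun y => -(Real.exp (-y ^ 2 / 2) / Real.sqrt (2 * Real.pi)))
          = fun y => -φ y := by funext y; rw [hφ]
      simp only [Pi.neg_def] at h3'
      rw [this] at h3'
      refine h3'.congr_deriv ?_
      rw [hφ]
      ring
    have htend : Filter.Tendsto (fun z => -φ z) Filter.atTop (nhds 0) := by
      have hb : Filter.Tendsto (fun z : ℝ => -z ^ 2 / 2) Filter.atTop Filter.atBot := by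
        apply Filter.Tendsto.atBot_div_const (by norm_num : (0:ℝ) < 2)
        exact Filter.tendsto_neg_atBot_iff.mpr (Filter.tendsto_pow_atTop (by norm_num))
      have := (Real.tendsto_exp_atBot.comp hb).div_const (Real.sqrt (2 * Real.pi))
      simp only [zero_div] at this
      have hphi : Filter.Tendsto φ Filter.atTop (nhds 0) := by
        apply this.congr
        intro z; rw [hφ]; rfl
      simpa using hphi.neg
    have := integral_Ioi_of_hasDerivAt_of_tendsto
      (f := fun y => -φ y) (f' := fun z => z * φ z) (a := d) (m := 0)
      (hderiv d).continuousAt.continuousWithinAt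
      (fun x _ => hderiv x) hIzφ.integrableOn htend
    rw [this]; ring
  -- Step 4b: `∫ z in Ioi d, φ z = Φ (-d)`
  have h4b : (∫ z in Set.Ioi d, φ z) = Φ (-d) := by
    rw [hΦ]
    have hsym : (∫ u in Set.Iic (-d), φ u) = ∫ u in Set.Iic (-d), φ (-u) := by
      refine setIntegral_congr_fun measurableSet_Iic fun u _ => ?_
      rw [hφ, hφ]; ring_nf
    rw [hsym, integral_comp_neg_Iic, neg_neg]
  -- put everything together
  rw [h1, h2, h3]
  rw [integral_sub hIzφ.integrableOn ((hIφ.const_mul d).integrableOn)]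
  rw [h4a, integral_const_mul, h4b]
end

section
/- Let Z be a d-dimensional centered Gaussian vector with invertible covariance matrix V, g : ℝᵈ → ℝ of polynomial growth. Then the Hessian in x of E[g(x + Z)] equals E[g(x + Z)(V⁻¹Z (V⁻¹Z)ᵀ − V⁻¹)]. -/
open MeasureTheory Matrix Real

noncomputable section Stmt13Aux

namespace Stmt13

variable {d : ℕ}

/-- dot product with `a` as a continuous linear map. -/
def dotL (a : Fin d → ℝ) : (Fin d → ℝ) →L[ℝ] ℝ :=
  ∑ i, a i • ContinuousLinearMap.proj i

lemma dotL_apply (a v : Fin d → ℝ) : dotL a v = a ⬝ᵥ v := by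
  simp [dotL, dotProduct, ContinuousLinearMap.sum_apply]

lemma norm_dotL_le (a : Fin d → ℝ) : ‖dotL a‖ ≤ d * ‖a‖ := by
  refine ContinuousLinearMap.opNorm_le_bound _ (by positivity) fun v => ?_
  rw [dotL_apply]
  calc ‖a ⬝ᵥ v‖ ≤ ∑ i, ‖a i * v i‖ := by
        simpa [dotProduct] using norm_sum_le Finset.univ (fun i => a i * v i)
    _ ≤ ∑ _i : Fin d, ‖a‖ * ‖v‖ := by
        refine Finset.sum_le_sum fun i _ => ?_
        rw [norm_mul]
        exact mul_le_mul (norm_le_pi_norm a i) (norm_le_pi_norm v i) (norm_nonneg _)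
          (norm_nonneg _)
    _ = d * ‖a‖ * ‖v‖ := by simp [mul_assoc]

lemma abs_dot_le (a v : Fin d → ℝ) : |a ⬝ᵥ v| ≤ (d * ‖a‖) * ‖v‖ := by
  have h := (dotL a).le_opNorm v
  rw [dotL_apply] at h
  calc |a ⬝ᵥ v| ≤ ‖dotL a‖ * ‖v‖ := h
    _ ≤ d * ‖a‖ * ‖v‖ := mul_le_mul_of_nonneg_right (norm_dotL_le a) (norm_nonneg _)

lemma norm_mulVec_le (M : Matrix (Fin d) (Fin d) ℝ) (u : Fin d → ℝ) :
    ‖M.mulVec u‖ ≤ (∑ i, ∑ j, |M i j|) * ‖u‖ := by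
  have h0 : (0:ℝ) ≤ (∑ i, ∑ j, |M i j|) * ‖u‖ := by positivity
  rw [pi_norm_le_iff_of_nonneg h0]
  intro i
  calc ‖M.mulVec u i‖ = |∑ j, M i j * u j| := by rfl
    _ ≤ ∑ j, |M i j * u j| := Finset.abs_sum_le_sum_abs _ _
    _ ≤ ∑ j, |M i j| * ‖u‖ := by
        refine Finset.sum_le_sum fun j _ => ?_
        rw [abs_mul]
        exact mul_le_mul_of_nonneg_left (norm_le_pi_norm u j) (abs_nonneg _)
    _ = (∑ j, |M i j|) * ‖u‖ := by rw [Finset.sum_mul]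
    _ ≤ (∑ i, ∑ j, |M i j|) * ‖u‖ := by
        refine mul_le_mul_of_nonneg_right ?_ (norm_nonneg _)
        exact Finset.single_le_sum (f := fun i => ∑ j, |M i j|)
          (fun i _ => by positivity) (Finset.mem_univ i)

/-- bilinear map `u ↦ dotL (M *ᵥ u)` as a continuous linear map. -/
def B2 (M : Matrix (Fin d) (Fin d) ℝ) :
    (Fin d → ℝ) →L[ℝ] (Fin d → ℝ) →L[ℝ] ℝ :=
  LinearMap.toContinuousLinearMap
  { toFun := fun u => dotL (M.mulVec u)
    map_add' := fun a b => by
      ext v; simp [dotL_apply, Matrix.mulVec_add, add_dotProduct]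
    map_smul' := fun r a => by
      ext v; simp [dotL_apply, Matrix.mulVec_smul, smul_dotProduct] }

lemma B2_apply (M : Matrix (Fin d) (Fin d) ℝ) (u v : Fin d → ℝ) :
    B2 M u v = M.mulVec u ⬝ᵥ v := by
  simp [B2, dotL_apply, LinearMap.coe_toContinuousLinearMap']

lemma B2_coe (M : Matrix (Fin d) (Fin d) ℝ) :
    (fun u => dotL (M.mulVec u)) = (B2 M : (Fin d → ℝ) → _) := by
  funext u; ext v; simp [B2_apply, dotL_apply]

lemma dot_symm {M : Matrix (Fin d) (Fin d) ℝ} (hMs : Mᵀ = M) (u v : Fin d → ℝ) :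
    M.mulVec u ⬝ᵥ v = u ⬝ᵥ M.mulVec v := by
  rw [Matrix.dotProduct_mulVec u M v, ← Matrix.vecMul_transpose, hMs, dotProduct_comm]

lemma hasFDerivAt_Q {M : Matrix (Fin d) (Fin d) ℝ} (hMs : Mᵀ = M) (u : Fin d → ℝ) :
    HasFDerivAt (fun z : Fin d → ℝ => z ⬝ᵥ M.mulVec z) ((2:ℝ) • dotL (M.mulVec u)) u := by
  have h := ((B2 M).hasFDerivAt (x := u)).clm_apply (hasFDerivAt_id u)
  simp only [id_eq] at h
  have he : (fun z : Fin d → ℝ => B2 M z z) = fun z => z ⬝ᵥ M.mulVec z := by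
    funext z; rw [B2_apply, dot_symm hMs]
  have hD : ((B2 M u).comp (ContinuousLinearMap.id ℝ (Fin d → ℝ)) + (B2 M).flip u)
      = (2:ℝ) • dotL (M.mulVec u) := by
    ext w
    simp only [ContinuousLinearMap.add_apply, ContinuousLinearMap.flip_apply,
      ContinuousLinearMap.smul_apply, ContinuousLinearMap.coe_comp',
      ContinuousLinearMap.coe_id', Function.comp_apply, id_eq, dotL_apply, B2_apply,
      smul_eq_mul]
    rw [dot_symm hMs w u, dotProduct_comm w (M.mulVec u)]
    ring
  rw [← he, ← hD]
  exact h

lemma hasFDerivAt_phif {M : Matrix (Fin d) (Fin d) ℝ} (hMs : Mᵀ = M) (K0 : ℝ)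
    (u : Fin d → ℝ) :
    HasFDerivAt (fun z : Fin d → ℝ => K0 * Real.exp (-(z ⬝ᵥ M.mulVec z) / 2))
      ((-(K0 * Real.exp (-(u ⬝ᵥ M.mulVec u) / 2))) • dotL (M.mulVec u)) u := by
  have h1 := (hasFDerivAt_Q hMs u).const_mul (-(1:ℝ)/2)
  have h2 := h1.exp.const_mul K0
  have hfun : (fun z : Fin d → ℝ => K0 * Real.exp (-(1:ℝ)/2 * (z ⬝ᵥ M.mulVec z)))
      = fun z : Fin d → ℝ => K0 * Real.exp (-(z ⬝ᵥ M.mulVec z) / 2) := by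
    funext z; congr 1; congr 1; ring
  rw [hfun] at h2
  have hder : K0 • (Real.exp (-(1:ℝ)/2 * (u ⬝ᵥ M.mulVec u))
        • ((-(1:ℝ)/2) • ((2:ℝ) • dotL (M.mulVec u))))
      = (-(K0 * Real.exp (-(u ⬝ᵥ M.mulVec u) / 2))) • dotL (M.mulVec u) := by
    have harg : -(1:ℝ)/2 * (u ⬝ᵥ M.mulVec u) = -(u ⬝ᵥ M.mulVec u) / 2 := by ring
    rw [harg]
    ext w
    simp only [ContinuousLinearMap.smul_apply, smul_eq_mul]
    ring
  rw [hder] at h2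
  exact h2

lemma hasFDerivAt_psi2 {M : Matrix (Fin d) (Fin d) ℝ} (hMs : Mᵀ = M) (K0 : ℝ)
    (v u : Fin d → ℝ) :
    HasFDerivAt (fun z : Fin d → ℝ =>
        (K0 * Real.exp (-(z ⬝ᵥ M.mulVec z) / 2)) * (M.mulVec z ⬝ᵥ v))
      ((K0 * Real.exp (-(u ⬝ᵥ M.mulVec u) / 2)) • dotL (M.mulVec v)
        + (M.mulVec u ⬝ᵥ v) • ((-(K0 * Real.exp (-(u ⬝ᵥ M.mulVec u) / 2)))
            • dotL (M.mulVec u))) u := by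
  have hlinfun : (fun z : Fin d → ℝ => M.mulVec z ⬝ᵥ v) = ⇑(dotL (M.mulVec v)) := by
    funext z
    rw [dotL_apply, dot_symm hMs z v, dotProduct_comm]
  have hlin : HasFDerivAt (fun z : Fin d → ℝ => M.mulVec z ⬝ᵥ v) (dotL (M.mulVec v)) u := by
    rw [hlinfun]; exact (dotL (M.mulVec v)).hasFDerivAt
  exact (hasFDerivAt_phif hMs K0 u).mul hlin

lemma posdef_lower {M : Matrix (Fin d) (Fin d) ℝ} (hM : M.PosDef) :
    ∃ c : ℝ, 0 < c ∧ ∀ z : Fin d → ℝ, c * ‖z‖ ^ 2 ≤ z ⬝ᵥ M.mulVec z := by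
  rcases Nat.eq_zero_or_pos d with hd | hd
  · refine ⟨1, one_pos, fun z => ?_⟩
    subst hd
    have hz : z = 0 := Subsingleton.elim z 0
    rw [hz, norm_zero]
    simp [dotProduct]
  · haveI : Nonempty (Fin d) := ⟨⟨0, hd⟩⟩
    have hcont : Continuous fun z : Fin d → ℝ => z ⬝ᵥ M.mulVec z := by
      simp only [dotProduct, Matrix.mulVec, dotProduct]
      fun_prop
    have hcomp : IsCompact (Metric.sphere (0 : Fin d → ℝ) 1) := isCompact_sphere 0 1
    have hne : (Metric.sphere (0 : Fin d → ℝ) 1).Nonempty := by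
      apply NormedSpace.sphere_nonempty.2
      norm_num
    obtain ⟨z₀, hz₀S, hz₀min⟩ := hcomp.exists_isMinOn hne hcont.continuousOn
    have hz₀norm : ‖z₀‖ = 1 := by simpa using hz₀S
    have hz₀ne : z₀ ≠ 0 := by
      intro h; rw [h] at hz₀norm; simp at hz₀norm
    refine ⟨z₀ ⬝ᵥ M.mulVec z₀, hM.dotProduct_mulVec_pos hz₀ne, fun z => ?_⟩
    rcases eq_or_ne z 0 with rfl | hz
    · simp [dotProduct]
    · have hnz : (0:ℝ) < ‖z‖ := norm_pos_iff.2 hz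
      set u := ‖z‖⁻¹ • z with hu
      have huS : u ∈ Metric.sphere (0 : Fin d → ℝ) 1 := by
        simp [hu, norm_smul, abs_of_pos (inv_pos.2 hnz), inv_mul_cancel₀ hnz.ne']
      have hmin := hz₀min huS
      have hqu : u ⬝ᵥ M.mulVec u = ‖z‖⁻¹ ^ 2 * (z ⬝ᵥ M.mulVec z) := by
        rw [hu, Matrix.mulVec_smul, smul_dotProduct, dotProduct_smul]
        simp [smul_eq_mul]; ring
      have hle : z₀ ⬝ᵥ M.mulVec z₀ ≤ ‖z‖⁻¹ ^ 2 * (z ⬝ᵥ M.mulVec z) := by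
        rw [← hqu]; exact hmin
      calc (z₀ ⬝ᵥ M.mulVec z₀) * ‖z‖ ^ 2
          ≤ (‖z‖⁻¹ ^ 2 * (z ⬝ᵥ M.mulVec z)) * ‖z‖ ^ 2 :=
            mul_le_mul_of_nonneg_right hle (by positivity)
        _ = z ⬝ᵥ M.mulVec z := by field_simp

lemma integrable_gauss {a : ℝ} (ha : 0 < a) :
    Integrable (fun z : Fin d → ℝ => Real.exp (-a * ‖z‖ ^ 2)) := by
  rcases Nat.eq_zero_or_pos d with hd | hd
  · subst hd
    haveI : IsFiniteMeasure (volume : Measure (Fin 0 → ℝ)) := by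
      constructor
      simp [volume_pi, Measure.pi_univ]
    have h : (fun z : Fin 0 → ℝ => Real.exp (-a * ‖z‖ ^ 2))
        = fun _ => Real.exp (-a * ‖(0 : Fin 0 → ℝ)‖ ^ 2) := by
      funext z; rw [Subsingleton.elim z 0]
    rw [h]
    exact integrable_const _
  · have hd' : (0:ℝ) < a / d := by positivity
    have h1 : Integrable (fun z : Fin d → ℝ => ∏ i, Real.exp (-(a / d) * (z i) ^ 2)) :=
      Integrable.fintype_prod (fun _ => integrable_exp_neg_mul_sq hd')
    refine h1.mono' ?_ ?_
    · exact (Continuous.aestronglyMeasurable (by fun_prop))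
    · refine Filter.Eventually.of_forall fun z => ?_
      rw [Real.norm_eq_abs, abs_of_nonneg (Real.exp_nonneg _), ← Real.exp_sum]
      apply Real.exp_le_exp.2
      have hsum : ∑ i, (z i) ^ 2 ≤ (d : ℝ) * ‖z‖ ^ 2 := by
        calc ∑ i, (z i) ^ 2 ≤ ∑ _i : Fin d, ‖z‖ ^ 2 := by
              refine Finset.sum_le_sum fun i _ => ?_
              rw [← sq_abs]
              exact pow_le_pow_left₀ (abs_nonneg _) (norm_le_pi_norm z i) 2
          _ = (d : ℝ) * ‖z‖ ^ 2 := by simp [mul_comm]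
      have hmul : ∑ i, -(a / d) * (z i) ^ 2 = -(a / d) * ∑ i, (z i) ^ 2 := by
        rw [Finset.mul_sum]
      rw [hmul]
      have h3 : (a / d) * ((d:ℝ) * ‖z‖ ^ 2) = a * ‖z‖ ^ 2 := by
        field_simp
      linarith [mul_le_mul_of_nonneg_left hsum hd'.le, h3.le, h3.ge]

lemma rpow_le_exp_sq {s a t : ℝ} (hs : 0 ≤ s) (ha : 0 < a) (ht : 0 ≤ t) :
    (1 + t) ^ s ≤ Real.exp (s ^ 2 / (2 * a)) * Real.exp (a * t ^ 2 / 2) := by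
  have h1 : (0:ℝ) < 1 + t := by linarith
  rw [Real.rpow_def_of_pos h1, ← Real.exp_add]
  apply Real.exp_le_exp.2
  have hlog : Real.log (1 + t) ≤ t := by
    have := Real.log_le_sub_one_of_pos h1
    linarith
  have h2 : Real.log (1 + t) * s ≤ t * s :=
    mul_le_mul_of_nonneg_right hlog hs
  have key : t * s ≤ a * t ^ 2 / 2 + s ^ 2 / (2 * a) := by
    rw [← sub_nonneg]
    have h2a : (0:ℝ) < 2 * a := by positivity
    have hq : a * t ^ 2 / 2 + s ^ 2 / (2 * a) - t * s
        = (a * t - s) ^ 2 / (2 * a) := by field_simp; ring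
    rw [hq]
    positivity
  linarith

lemma integrable_rpow_gauss {a : ℝ} (ha : 0 < a) (s : ℝ) :
    Integrable (fun z : Fin d → ℝ => (1 + ‖z‖) ^ s * Real.exp (-a * ‖z‖ ^ 2)) := by
  set s' := max s 0 with hs'
  have hs0 : 0 ≤ s' := le_max_right _ _
  have hint : Integrable (fun z : Fin d → ℝ =>
      Real.exp (s' ^ 2 / (2 * a)) * Real.exp (-(a/2) * ‖z‖ ^ 2)) :=
    (integrable_gauss (by positivity)).const_mul _
  refine hint.mono' ?_ ?_
  · apply Continuous.aestronglyMeasurable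
    apply Continuous.mul ?_ (by fun_prop)
    apply Continuous.rpow_const (by fun_prop)
    intro z; left; positivity
  · refine Filter.Eventually.of_forall fun z => ?_
    have h1 : (0:ℝ) < 1 + ‖z‖ := by positivity
    have hb : (1 + ‖z‖) ^ s ≤ (1 + ‖z‖) ^ s' :=
      Real.rpow_le_rpow_of_exponent_le (by linarith [norm_nonneg z]) (le_max_left _ _)
    have hb2 := rpow_le_exp_sq hs0 ha (norm_nonneg z)
    rw [Real.norm_eq_abs, abs_of_nonneg (by positivity)]
    calc (1 + ‖z‖) ^ s * Real.exp (-a * ‖z‖ ^ 2)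
        ≤ (Real.exp (s' ^ 2 / (2 * a)) * Real.exp (a * ‖z‖ ^ 2 / 2))
            * Real.exp (-a * ‖z‖ ^ 2) :=
          mul_le_mul_of_nonneg_right (hb.trans hb2) (Real.exp_nonneg _)
      _ = Real.exp (s' ^ 2 / (2 * a)) * Real.exp (-(a/2) * ‖z‖ ^ 2) := by
          rw [mul_assoc, ← Real.exp_add]; ring_nf

/-- master integrability: polynomial growth times shifted gaussian. -/
lemma integrable_mixed (r : ℝ) (n : ℕ) {a : ℝ} (ha : 0 < a) (x₀ : Fin d → ℝ) :
    Integrable (fun y : Fin d → ℝ =>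
      (1 + ‖y‖) ^ r * ((1 + ‖y - x₀‖) ^ n * Real.exp (-a * ‖y - x₀‖ ^ 2))) := by
  have key : Integrable (fun z : Fin d → ℝ =>
      (1 + ‖z + x₀‖) ^ r * ((1 + ‖z‖) ^ n * Real.exp (-a * ‖z‖ ^ 2))) := by
    have hint : Integrable (fun z : Fin d → ℝ =>
        (1 + ‖x₀‖) ^ |r| * ((1 + ‖z‖) ^ (|r| + n) * Real.exp (-a * ‖z‖ ^ 2))) :=
      ((integrable_rpow_gauss ha (|r| + n)).const_mul _)
    refine hint.mono' ?_ ?_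
    · apply Continuous.aestronglyMeasurable
      apply Continuous.mul
      · apply Continuous.rpow_const (by fun_prop)
        intro z; left; positivity
      · fun_prop
    · refine Filter.Eventually.of_forall fun z => ?_
      have h1 : (0:ℝ) < 1 + ‖z + x₀‖ := by positivity
      have h2 : (0:ℝ) < 1 + ‖z‖ := by positivity
      have hb1 : (1 + ‖z + x₀‖) ^ r ≤ (1 + ‖z + x₀‖) ^ |r| :=
        Real.rpow_le_rpow_of_exponent_le (by linarith [norm_nonneg (z + x₀)]) (le_abs_self r)
      have hb2 : (1 + ‖z + x₀‖) ^ |r| ≤ ((1 + ‖x₀‖) * (1 + ‖z‖)) ^ |r| := by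
        apply Real.rpow_le_rpow h1.le ?_ (abs_nonneg r)
        have := norm_add_le z x₀
        nlinarith [norm_nonneg z, norm_nonneg x₀]
      have hb3 : ((1 + ‖x₀‖) * (1 + ‖z‖)) ^ |r| = (1 + ‖x₀‖) ^ |r| * (1 + ‖z‖) ^ |r| :=
        Real.mul_rpow (by positivity) (by positivity)
      rw [Real.norm_eq_abs, abs_of_nonneg (by positivity)]
      have hexp : (1 + ‖z‖) ^ (n:ℕ) = (1 + ‖z‖) ^ ((n:ℝ)) :=
        (Real.rpow_natCast _ n).symm
      calc (1 + ‖z + x₀‖) ^ r * ((1 + ‖z‖) ^ (n:ℕ) * Real.exp (-a * ‖z‖ ^ 2))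
          ≤ ((1 + ‖x₀‖) ^ |r| * (1 + ‖z‖) ^ |r|)
              * ((1 + ‖z‖) ^ (n:ℕ) * Real.exp (-a * ‖z‖ ^ 2)) :=
            mul_le_mul_of_nonneg_right ((hb1.trans hb2).trans_eq hb3) (by positivity)
        _ = (1 + ‖x₀‖) ^ |r| * ((1 + ‖z‖) ^ (|r| + n) * Real.exp (-a * ‖z‖ ^ 2)) := by
            rw [hexp, Real.rpow_add h2]; ring
  have hfin := key.comp_sub_right x₀
  simp only [sub_add_cancel] at hfin
  exact hfin

variable {g : (Fin d → ℝ) → ℝ} {C p : ℝ}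

lemma integrable_g_smul (hg : Measurable g)
    (hgrowth : ∀ y, |g y| ≤ C * (1 + ‖y‖) ^ p)
    {W : Type*} [NormedAddCommGroup W] [NormedSpace ℝ W]
    {h : (Fin d → ℝ) → W} (hc : Continuous h) {c₀ : ℝ} (hc₀ : 0 < c₀) {b : ℝ} {m : ℕ}
    (hb : ∀ u, ‖h u‖ ≤ b * ((1 + ‖u‖) ^ m * Real.exp (-c₀ * ‖u‖ ^ 2))) (x : Fin d → ℝ) :
    Integrable (fun y => g y • h (y - x)) := by
  have hint := (integrable_mixed p m hc₀ x).const_mul (C * b)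
  refine hint.mono' ?_ ?_
  · exact hg.aestronglyMeasurable.smul
      ((hc.comp (continuous_id.sub continuous_const)).aestronglyMeasurable)
  · refine Filter.Eventually.of_forall fun y => ?_
    rw [norm_smul, Real.norm_eq_abs]
    have h1 : |g y| ≤ C * (1 + ‖y‖) ^ p := hgrowth y
    have h2 : ‖h (y - x)‖ ≤ b * ((1 + ‖y - x‖) ^ m * Real.exp (-c₀ * ‖y - x‖ ^ 2)) := hb _
    have h3 : (0:ℝ) ≤ C * (1 + ‖y‖) ^ p := le_trans (abs_nonneg _) h1
    calc |g y| * ‖h (y - x)‖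
        ≤ (C * (1 + ‖y‖) ^ p) * (b * ((1 + ‖y - x‖) ^ m * Real.exp (-c₀ * ‖y - x‖ ^ 2))) :=
          mul_le_mul h1 h2 (norm_nonneg _) h3
      _ = C * b * ((1 + ‖y‖) ^ p * ((1 + ‖y - x‖) ^ m * Real.exp (-c₀ * ‖y - x‖ ^ 2))) := by
          ring

lemma shift_bound {c₀ : ℝ} (hc₀ : 0 < c₀) (m : ℕ) {x x₀ y : Fin d → ℝ}
    (hx : x ∈ Metric.ball x₀ 1) :
    (1 + ‖y - x‖) ^ m * Real.exp (-c₀ * ‖y - x‖ ^ 2)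
      ≤ 2 ^ m * Real.exp c₀ * ((1 + ‖y - x₀‖) ^ m * Real.exp (-(c₀/2) * ‖y - x₀‖ ^ 2)) := by
  have hxx : ‖x - x₀‖ ≤ 1 := by
    have := Metric.mem_ball.1 hx
    rw [dist_eq_norm] at this
    linarith
  set u := ‖y - x‖ with hu
  set t := ‖y - x₀‖ with ht
  have hu0 : 0 ≤ u := norm_nonneg _
  have ht0 : 0 ≤ t := norm_nonneg _
  have hut : u ≤ t + 1 := by
    calc u = ‖(y - x₀) + (x₀ - x)‖ := by rw [hu]; ring_nf
      _ ≤ ‖y - x₀‖ + ‖x₀ - x‖ := norm_add_le _ _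
      _ ≤ t + 1 := by
          have hh : ‖x₀ - x‖ = ‖x - x₀‖ := norm_sub_rev _ _
          linarith
  have htu : t ≤ u + 1 := by
    calc t = ‖(y - x) + (x - x₀)‖ := by rw [ht]; ring_nf
      _ ≤ ‖y - x‖ + ‖x - x₀‖ := norm_add_le _ _
      _ ≤ u + 1 := by linarith
  have hpow : (1 + u) ^ m ≤ 2 ^ m * (1 + t) ^ m := by
    rw [← mul_pow]
    refine pow_le_pow_left₀ (by linarith) (by linarith) m
  have hexp : Real.exp (-c₀ * u ^ 2) ≤ Real.exp c₀ * Real.exp (-(c₀/2) * t ^ 2) := by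
    rw [← Real.exp_add]
    apply Real.exp_le_exp.2
    have hsq : t ^ 2 / 2 - 1 ≤ u ^ 2 := by nlinarith [sq_nonneg (u - 1)]
    nlinarith [hc₀]
  calc (1 + u) ^ m * Real.exp (-c₀ * u ^ 2)
      ≤ (2 ^ m * (1 + t) ^ m) * (Real.exp c₀ * Real.exp (-(c₀/2) * t ^ 2)) :=
        mul_le_mul hpow hexp (Real.exp_nonneg _) (by positivity)
    _ = 2 ^ m * Real.exp c₀ * ((1 + t) ^ m * Real.exp (-(c₀/2) * t ^ 2)) := by ring

set_option synthInstance.maxHeartbeats 1000000 in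
set_option maxHeartbeats 1000000 in
lemma hasFDerivAt_step (hg : Measurable g)
    (hgrowth : ∀ y, |g y| ≤ C * (1 + ‖y‖) ^ p)
    {c₀ : ℝ} (hc₀ : 0 < c₀) {ψ : (Fin d → ℝ) → ℝ}
    {ψ' : (Fin d → ℝ) → (Fin d → ℝ) →L[ℝ] ℝ} (hψc : Continuous ψ) (hψ'c : Continuous ψ')
    (hψd : ∀ u, HasFDerivAt ψ (ψ' u) u) {m : ℕ} {b b' : ℝ}
    (hb : ∀ u, |ψ u| ≤ b * ((1 + ‖u‖) ^ m * Real.exp (-c₀ * ‖u‖ ^ 2)))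
    (hb' : ∀ u, ‖ψ' u‖ ≤ b' * ((1 + ‖u‖) ^ m * Real.exp (-c₀ * ‖u‖ ^ 2)))
    (x₀ : Fin d → ℝ) :
    HasFDerivAt (fun x => ∫ y, g y * ψ (y - x)) (- ∫ y, g y • ψ' (y - x₀)) x₀ := by
  have hb'0 : 0 ≤ b' := by
    have := hb' 0
    simpa using le_trans (norm_nonneg _) this
  have key := hasFDerivAt_integral_of_dominated_of_fderiv_le
    (F := fun x y => g y * ψ (y - x))
    (F' := fun x y => -(g y • ψ' (y - x)))
    (μ := volume)
    (x₀ := x₀)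
    (bound := fun y => (C * (b' * (2 ^ m * Real.exp c₀)))
      * ((1 + ‖y‖) ^ p * ((1 + ‖y - x₀‖) ^ m * Real.exp (-(c₀/2) * ‖y - x₀‖ ^ 2))))
    (Metric.ball_mem_nhds x₀ one_pos)
    ?_ ?_ ?_ ?_ ?_ ?_
  · have hneg : (∫ y, -(g y • ψ' (y - x₀))) = - ∫ y, g y • ψ' (y - x₀) := integral_neg _
    rw [hneg] at key
    exact key
  · refine Filter.Eventually.of_forall fun x => ?_
    exact hg.aestronglyMeasurable.mul
      ((hψc.comp (continuous_id.sub continuous_const)).aestronglyMeasurable)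
  · have := integrable_g_smul hg hgrowth hψc hc₀
      (b := b) (m := m) (fun u => by simpa [Real.norm_eq_abs] using hb u) x₀
    simpa [smul_eq_mul] using this
  · exact (hg.aestronglyMeasurable.smul
      ((hψ'c.comp (continuous_id.sub continuous_const)).aestronglyMeasurable)).neg
  · refine Filter.Eventually.of_forall fun y => fun x hx => ?_
    rw [norm_neg, @norm_smul ℝ _ _ _ _ _ (g y) (ψ' (y - x)), Real.norm_eq_abs]
    have h1 : |g y| ≤ C * (1 + ‖y‖) ^ p := hgrowth y
    have h3 : (0:ℝ) ≤ C * (1 + ‖y‖) ^ p := le_trans (abs_nonneg _) h1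
    have h2 : ‖ψ' (y - x)‖
        ≤ b' * (2 ^ m * Real.exp c₀
          * ((1 + ‖y - x₀‖) ^ m * Real.exp (-(c₀/2) * ‖y - x₀‖ ^ 2))) := by
      refine le_trans (hb' _) ?_
      exact mul_le_mul_of_nonneg_left (shift_bound hc₀ m hx) hb'0
    calc |g y| * ‖ψ' (y - x)‖
        ≤ (C * (1 + ‖y‖) ^ p) * (b' * (2 ^ m * Real.exp c₀
            * ((1 + ‖y - x₀‖) ^ m * Real.exp (-(c₀/2) * ‖y - x₀‖ ^ 2)))) :=
          mul_le_mul h1 h2 (norm_nonneg _) h3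
      _ = (C * (b' * (2 ^ m * Real.exp c₀)))
            * ((1 + ‖y‖) ^ p * ((1 + ‖y - x₀‖) ^ m
              * Real.exp (-(c₀/2) * ‖y - x₀‖ ^ 2))) := by ring
  · exact (integrable_mixed p m (by positivity) x₀).const_mul _
  · refine Filter.Eventually.of_forall fun y => fun x hx => ?_
    have h1 : HasFDerivAt (fun x : Fin d → ℝ => y - x)
        (-(ContinuousLinearMap.id ℝ (Fin d → ℝ))) x := (hasFDerivAt_id x).const_sub y
    have h2 := ((hψd (y - x)).comp x h1).const_mul (g y)
    have hEq : (g y) • ((ψ' (y - x)).comp (-(ContinuousLinearMap.id ℝ (Fin d → ℝ))))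
        = -(g y • ψ' (y - x)) := by
      ext w
      simp
    rw [hEq] at h2
    exact h2


/-- the gaussian density shape -/
noncomputable def phif (M : Matrix (Fin d) (Fin d) ℝ) (K0 : ℝ) : (Fin d → ℝ) → ℝ :=
  fun z => K0 * Real.exp (-(z ⬝ᵥ M.mulVec z) / 2)

noncomputable def psi1' (M : Matrix (Fin d) (Fin d) ℝ) (K0 : ℝ) :
    (Fin d → ℝ) → (Fin d → ℝ) →L[ℝ] ℝ :=
  fun u => (-(phif M K0 u)) • dotL (M.mulVec u)

noncomputable def psi2 (M : Matrix (Fin d) (Fin d) ℝ) (K0 : ℝ) (v : Fin d → ℝ) :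
    (Fin d → ℝ) → ℝ :=
  fun u => phif M K0 u * (M.mulVec u ⬝ᵥ v)

noncomputable def psi2' (M : Matrix (Fin d) (Fin d) ℝ) (K0 : ℝ) (v : Fin d → ℝ) :
    (Fin d → ℝ) → (Fin d → ℝ) →L[ℝ] ℝ :=
  fun u => (phif M K0 u) • dotL (M.mulVec v)
    + (M.mulVec u ⬝ᵥ v) • ((-(phif M K0 u)) • dotL (M.mulVec u))

lemma hasFDerivAt_phif' {M : Matrix (Fin d) (Fin d) ℝ} (hMs : Mᵀ = M) (K0 : ℝ)
    (u : Fin d → ℝ) : HasFDerivAt (phif M K0) (psi1' M K0 u) u :=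
  hasFDerivAt_phif hMs K0 u

lemma hasFDerivAt_psi2'' {M : Matrix (Fin d) (Fin d) ℝ} (hMs : Mᵀ = M) (K0 : ℝ)
    (v u : Fin d → ℝ) : HasFDerivAt (psi2 M K0 v) (psi2' M K0 v u) u :=
  hasFDerivAt_psi2 hMs K0 v u

noncomputable def betaM (M : Matrix (Fin d) (Fin d) ℝ) : ℝ :=
  (d : ℝ) * ∑ i, ∑ j, |M i j|

lemma betaM_nonneg (M : Matrix (Fin d) (Fin d) ℝ) : 0 ≤ betaM M := by
  unfold betaM; positivity

lemma norm_dotL_mulVec_le (M : Matrix (Fin d) (Fin d) ℝ) (u : Fin d → ℝ) :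
    ‖dotL (M.mulVec u)‖ ≤ betaM M * ‖u‖ := by
  calc ‖dotL (M.mulVec u)‖ ≤ d * ‖M.mulVec u‖ := norm_dotL_le _
    _ ≤ d * ((∑ i, ∑ j, |M i j|) * ‖u‖) := by
        refine mul_le_mul_of_nonneg_left (norm_mulVec_le M u) (by positivity)
    _ = betaM M * ‖u‖ := by unfold betaM; ring

lemma abs_dot_mulVec_le (M : Matrix (Fin d) (Fin d) ℝ) (u w : Fin d → ℝ) :
    |M.mulVec u ⬝ᵥ w| ≤ (betaM M * ‖u‖) * ‖w‖ := by
  calc |M.mulVec u ⬝ᵥ w| ≤ (d * ‖M.mulVec u‖) * ‖w‖ := abs_dot_le _ _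
    _ ≤ (betaM M * ‖u‖) * ‖w‖ := by
        refine mul_le_mul_of_nonneg_right ?_ (norm_nonneg _)
        calc (d:ℝ) * ‖M.mulVec u‖ ≤ d * ((∑ i, ∑ j, |M i j|) * ‖u‖) := by
              refine mul_le_mul_of_nonneg_left (norm_mulVec_le M u) (by positivity)
          _ = betaM M * ‖u‖ := by unfold betaM; ring

variable {M : Matrix (Fin d) (Fin d) ℝ} {K0 c : ℝ}

lemma phif_nonneg (hK0 : 0 ≤ K0) (u : Fin d → ℝ) : 0 ≤ phif M K0 u := by
  unfold phif; positivity

lemma phif_le (hK0 : 0 ≤ K0) (hcq : ∀ z : Fin d → ℝ, c * ‖z‖ ^ 2 ≤ z ⬝ᵥ M.mulVec z)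
    (u : Fin d → ℝ) : phif M K0 u ≤ K0 * Real.exp (-(c/2) * ‖u‖ ^ 2) := by
  unfold phif
  refine mul_le_mul_of_nonneg_left ?_ hK0
  apply Real.exp_le_exp.2
  have := hcq u
  linarith

lemma one_le_sq (t : ℝ) (ht : 0 ≤ t) : (1:ℝ) ≤ (1 + t) ^ 2 := by nlinarith

lemma le_sq (t : ℝ) (ht : 0 ≤ t) : t ≤ (1 + t) ^ 2 := by nlinarith

lemma bound_phif (hK0 : 0 ≤ K0) (hcq : ∀ z : Fin d → ℝ, c * ‖z‖ ^ 2 ≤ z ⬝ᵥ M.mulVec z)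
    (u : Fin d → ℝ) :
    |phif M K0 u| ≤ K0 * ((1 + ‖u‖) ^ 2 * Real.exp (-(c/2) * ‖u‖ ^ 2)) := by
  rw [abs_of_nonneg (phif_nonneg hK0 u)]
  refine le_trans (phif_le hK0 hcq u) ?_
  have h1 := one_le_sq ‖u‖ (norm_nonneg u)
  nlinarith [Real.exp_nonneg (-(c/2) * ‖u‖ ^ 2), hK0,
    mul_nonneg hK0 (Real.exp_nonneg (-(c/2) * ‖u‖ ^ 2))]

lemma bound_psi1' (hK0 : 0 ≤ K0) (hcq : ∀ z : Fin d → ℝ, c * ‖z‖ ^ 2 ≤ z ⬝ᵥ M.mulVec z)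
    (u : Fin d → ℝ) :
    ‖psi1' M K0 u‖ ≤ (K0 * betaM M) * ((1 + ‖u‖) ^ 2 * Real.exp (-(c/2) * ‖u‖ ^ 2)) := by
  unfold psi1'
  rw [@norm_smul ℝ _ _ _ _ _ (-(phif M K0 u)) (dotL (M.mulVec u)), Real.norm_eq_abs,
    abs_neg, abs_of_nonneg (phif_nonneg hK0 u)]
  calc phif M K0 u * ‖dotL (M.mulVec u)‖
      ≤ (K0 * Real.exp (-(c/2) * ‖u‖ ^ 2)) * (betaM M * ‖u‖) :=
        mul_le_mul (phif_le hK0 hcq u) (norm_dotL_mulVec_le M u) (norm_nonneg _)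
          (by positivity)
    _ ≤ (K0 * betaM M) * ((1 + ‖u‖) ^ 2 * Real.exp (-(c/2) * ‖u‖ ^ 2)) := by
        have h1 := le_sq ‖u‖ (norm_nonneg u)
        nlinarith [Real.exp_nonneg (-(c/2) * ‖u‖ ^ 2), hK0, betaM_nonneg M,
          mul_nonneg (mul_nonneg hK0 (betaM_nonneg M)) (Real.exp_nonneg (-(c/2) * ‖u‖ ^ 2))]

lemma bound_psi2 (hK0 : 0 ≤ K0) (hcq : ∀ z : Fin d → ℝ, c * ‖z‖ ^ 2 ≤ z ⬝ᵥ M.mulVec z)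
    (v u : Fin d → ℝ) :
    |psi2 M K0 v u| ≤ (K0 * betaM M * ‖v‖) * ((1 + ‖u‖) ^ 2 * Real.exp (-(c/2) * ‖u‖ ^ 2)) := by
  unfold psi2
  rw [abs_mul, abs_of_nonneg (phif_nonneg hK0 u)]
  calc phif M K0 u * |M.mulVec u ⬝ᵥ v|
      ≤ (K0 * Real.exp (-(c/2) * ‖u‖ ^ 2)) * ((betaM M * ‖u‖) * ‖v‖) :=
        mul_le_mul (phif_le hK0 hcq u) (abs_dot_mulVec_le M u v) (abs_nonneg _)
          (by positivity)
    _ ≤ (K0 * betaM M * ‖v‖) * ((1 + ‖u‖) ^ 2 * Real.exp (-(c/2) * ‖u‖ ^ 2)) := by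
        have h1 := le_sq ‖u‖ (norm_nonneg u)
        nlinarith [Real.exp_nonneg (-(c/2) * ‖u‖ ^ 2),
          mul_nonneg (mul_nonneg (mul_nonneg hK0 (betaM_nonneg M)) (norm_nonneg v))
            (Real.exp_nonneg (-(c/2) * ‖u‖ ^ 2))]

lemma bound_psi2' (hK0 : 0 ≤ K0) (hcq : ∀ z : Fin d → ℝ, c * ‖z‖ ^ 2 ≤ z ⬝ᵥ M.mulVec z)
    (v u : Fin d → ℝ) :
    ‖psi2' M K0 v u‖
      ≤ (K0 * betaM M * ‖v‖ * (1 + betaM M))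
        * ((1 + ‖u‖) ^ 2 * Real.exp (-(c/2) * ‖u‖ ^ 2)) := by
  unfold psi2'
  set e := Real.exp (-(c/2) * ‖u‖ ^ 2) with he
  have he0 : 0 ≤ e := Real.exp_nonneg _
  have hβ := betaM_nonneg M
  have hφle := phif_le hK0 hcq u
  have hφ0 := phif_nonneg (M := M) hK0 u
  have ht0 : (0:ℝ) ≤ ‖u‖ := norm_nonneg u
  have hv0 : (0:ℝ) ≤ ‖v‖ := norm_nonneg v
  have h1 : ‖(phif M K0 u) • dotL (M.mulVec v)‖ ≤ (K0 * e) * (betaM M * ‖v‖) := by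
    rw [@norm_smul ℝ _ _ _ _ _ (phif M K0 u) (dotL (M.mulVec v)), Real.norm_eq_abs,
      abs_of_nonneg hφ0]
    exact mul_le_mul hφle (norm_dotL_mulVec_le M v) (norm_nonneg _) (by positivity)
  have h2 : ‖(M.mulVec u ⬝ᵥ v) • ((-(phif M K0 u)) • dotL (M.mulVec u))‖
      ≤ ((betaM M * ‖u‖) * ‖v‖) * ((K0 * e) * (betaM M * ‖u‖)) := by
    rw [@norm_smul ℝ _ _ _ _ _ (M.mulVec u ⬝ᵥ v) ((-(phif M K0 u)) • dotL (M.mulVec u)),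
      Real.norm_eq_abs]
    refine mul_le_mul (abs_dot_mulVec_le M u v) ?_ (norm_nonneg _) (by positivity)
    rw [@norm_smul ℝ _ _ _ _ _ (-(phif M K0 u)) (dotL (M.mulVec u)), Real.norm_eq_abs,
      abs_neg, abs_of_nonneg hφ0]
    exact mul_le_mul hφle (norm_dotL_mulVec_le M u) (norm_nonneg _) (by positivity)
  refine le_trans (norm_add_le _ _) (le_trans (add_le_add h1 h2) ?_)
  have hq : 1 + betaM M * ‖u‖ ^ 2 ≤ (1 + betaM M) * (1 + ‖u‖) ^ 2 := by nlinarith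
  have hkey : (K0 * e) * (betaM M * ‖v‖)
        + ((betaM M * ‖u‖) * ‖v‖) * ((K0 * e) * (betaM M * ‖u‖))
      = (K0 * betaM M * ‖v‖ * e) * (1 + betaM M * ‖u‖ ^ 2) := by ring
  rw [hkey]
  calc (K0 * betaM M * ‖v‖ * e) * (1 + betaM M * ‖u‖ ^ 2)
      ≤ (K0 * betaM M * ‖v‖ * e) * ((1 + betaM M) * (1 + ‖u‖) ^ 2) :=
        mul_le_mul_of_nonneg_left hq (by positivity)
    _ = (K0 * betaM M * ‖v‖ * (1 + betaM M)) * ((1 + ‖u‖) ^ 2 * e) := by ring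

lemma cont_phif {M : Matrix (Fin d) (Fin d) ℝ} (hMs : Mᵀ = M) (K0 : ℝ) :
    Continuous (phif M K0) := by
  have contQ : Continuous fun z : Fin d → ℝ => z ⬝ᵥ M.mulVec z :=
    continuous_iff_continuousAt.2 fun u =>
      (hasFDerivAt_Q hMs u).differentiableAt.continuousAt
  unfold phif
  exact continuous_const.mul (Real.continuous_exp.comp ((contQ.neg).div_const 2))

lemma cont_dotL_mulVec (M : Matrix (Fin d) (Fin d) ℝ) :
    Continuous fun u : Fin d → ℝ => dotL (M.mulVec u) := by
  rw [B2_coe]; exact (B2 M).continuous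

lemma cont_lin {M : Matrix (Fin d) (Fin d) ℝ} (v : Fin d → ℝ) :
    Continuous fun u : Fin d → ℝ => M.mulVec u ⬝ᵥ v := by
  have h : (fun u : Fin d → ℝ => M.mulVec u ⬝ᵥ v)
      = fun u => dotL (M.mulVec u) v := by
    funext u; rw [dotL_apply]
  rw [h]
  exact (ContinuousLinearMap.apply ℝ ℝ v).continuous.comp (cont_dotL_mulVec M)

lemma cont_psi1' {M : Matrix (Fin d) (Fin d) ℝ} (hMs : Mᵀ = M) (K0 : ℝ) :
    Continuous (psi1' M K0) := by
  unfold psi1'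
  exact ((cont_phif hMs K0).neg).smul (cont_dotL_mulVec M)

lemma cont_psi2 {M : Matrix (Fin d) (Fin d) ℝ} (hMs : Mᵀ = M) (K0 : ℝ) (v : Fin d → ℝ) :
    Continuous (psi2 M K0 v) := by
  unfold psi2
  exact (cont_phif hMs K0).mul (cont_lin v)

lemma cont_psi2' {M : Matrix (Fin d) (Fin d) ℝ} (hMs : Mᵀ = M) (K0 : ℝ) (v : Fin d → ℝ) :
    Continuous (psi2' M K0 v) := by
  unfold psi2'
  exact ((cont_phif hMs K0).smul continuous_const).add
    ((cont_lin v).smul (((cont_phif hMs K0).neg).smul (cont_dotL_mulVec M)))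

end Stmt13

end Stmt13Aux

set_option maxHeartbeats 2000000 in
set_option synthInstance.maxHeartbeats 1000000 in
/-- Let `Z` be a `d`-dimensional centered Gaussian vector with invertible
covariance matrix `V` (with density `φ` w.r.t. Lebesgue measure), and
`g : ℝᵈ → ℝ` measurable of polynomial growth. Then the Hessian of
`x ↦ E[g(x + Z)]` at `x` equals `E[g(x + Z)(V⁻¹Z (V⁻¹Z)ᵀ − V⁻¹)]`, i.e. its
bilinear action on directions `(v, w)` is
`E[g(x + Z)((V⁻¹Z ⬝ v)(V⁻¹Z ⬝ w) − vᵀV⁻¹w)]`. -/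
theorem stmt13 {d : ℕ} (V : Matrix (Fin d) (Fin d) ℝ) (hV : V.PosDef)
    (g : (Fin d → ℝ) → ℝ) (hg : Measurable g)
    (C p : ℝ) (hgrowth : ∀ y, |g y| ≤ C * (1 + ‖y‖) ^ p)
    (φ : (Fin d → ℝ) → ℝ)
    (hφ : ∀ z, φ z
      = (Real.sqrt ((2 * Real.pi) ^ d * V.det))⁻¹
          * Real.exp (-(z ⬝ᵥ V⁻¹.mulVec z) / 2))
    (F : (Fin d → ℝ) → ℝ)
    (hF : ∀ x, F x = ∫ z, g (x + z) * φ z)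
    (x : Fin d → ℝ) :
    (∀ v : Fin d → ℝ, DifferentiableAt ℝ (fun y => fderiv ℝ F y v) x)
      ∧ ∀ v w : Fin d → ℝ,
          fderiv ℝ (fun y => fderiv ℝ F y v) x w
            = ∫ z, g (x + z)
                * ((V⁻¹.mulVec z ⬝ᵥ v) * (V⁻¹.mulVec z ⬝ᵥ w) - v ⬝ᵥ V⁻¹.mulVec w)
                * φ z := by
  have hMpd : (V⁻¹).PosDef := hV.inv
  have hMs : (V⁻¹)ᵀ = V⁻¹ := by
    have hh := hMpd.isHermitian
    ext i j
    have h2 := congrFun (congrFun hh i) j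
    simpa using h2
  obtain ⟨c, hc, hcq⟩ := Stmt13.posdef_lower hMpd
  have hc₀ : 0 < c / 2 := by positivity
  set K0 := (Real.sqrt ((2 * Real.pi) ^ d * V.det))⁻¹ with hK0def
  have hK00 : (0:ℝ) ≤ K0 := by rw [hK0def]; positivity
  have hφf : φ = Stmt13.phif V⁻¹ K0 := funext fun z => by rw [hφ z]; rfl
  have hFeq : F = fun x' => ∫ y, g y * Stmt13.phif V⁻¹ K0 (y - x') := by
    funext x'
    rw [hF x', hφf]
    have hsub : (fun z => g (x' + z) * Stmt13.phif V⁻¹ K0 z)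
        = fun z => (fun y => g y * Stmt13.phif V⁻¹ K0 (y - x')) (z + x') := by
      funext z
      show g (x' + z) * Stmt13.phif V⁻¹ K0 z
        = g (z + x') * Stmt13.phif V⁻¹ K0 (z + x' - x')
      rw [add_sub_cancel_right, add_comm x' z]
    rw [hsub]
    exact integral_add_right_eq_self (μ := volume)
      (fun y => g y * Stmt13.phif V⁻¹ K0 (y - x')) x'
  have hstep1 : ∀ y₀ : Fin d → ℝ, HasFDerivAt F
      (- ∫ y, g y • Stmt13.psi1' V⁻¹ K0 (y - y₀)) y₀ := by
    intro y₀
    rw [hFeq]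
    exact Stmt13.hasFDerivAt_step hg hgrowth hc₀ (Stmt13.cont_phif hMs K0)
      (Stmt13.cont_psi1' hMs K0) (fun u => Stmt13.hasFDerivAt_phif' hMs K0 u)
      (Stmt13.bound_phif hK00 hcq) (Stmt13.bound_psi1' hK00 hcq) y₀
  have happ : ∀ v y₀ : Fin d → ℝ, fderiv ℝ F y₀ v
      = ∫ y, g y * Stmt13.psi2 V⁻¹ K0 v (y - y₀) := by
    intro v y₀
    rw [(hstep1 y₀).fderiv]
    have hint : Integrable (fun y => g y • Stmt13.psi1' V⁻¹ K0 (y - y₀)) :=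
      Stmt13.integrable_g_smul hg hgrowth (Stmt13.cont_psi1' hMs K0) hc₀
        (Stmt13.bound_psi1' hK00 hcq) y₀
    rw [ContinuousLinearMap.neg_apply, ContinuousLinearMap.integral_apply hint v,
      ← integral_neg]
    congr 1
    funext y
    show -((g y • Stmt13.psi1' V⁻¹ K0 (y - y₀)) v) = g y * Stmt13.psi2 V⁻¹ K0 v (y - y₀)
    rw [ContinuousLinearMap.smul_apply]
    unfold Stmt13.psi1' Stmt13.psi2
    rw [ContinuousLinearMap.smul_apply, Stmt13.dotL_apply]
    simp only [smul_eq_mul]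
    ring
  have hstep2 : ∀ v : Fin d → ℝ, HasFDerivAt (fun y => fderiv ℝ F y v)
      (- ∫ y, g y • Stmt13.psi2' V⁻¹ K0 v (y - x)) x := by
    intro v
    have hfun : (fun y => fderiv ℝ F y v)
        = fun y₀ => ∫ y, g y * Stmt13.psi2 V⁻¹ K0 v (y - y₀) := funext (happ v)
    rw [hfun]
    exact Stmt13.hasFDerivAt_step hg hgrowth hc₀ (Stmt13.cont_psi2 hMs K0 v)
      (Stmt13.cont_psi2' hMs K0 v) (fun u => Stmt13.hasFDerivAt_psi2'' hMs K0 v u)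
      (Stmt13.bound_psi2 hK00 hcq v) (Stmt13.bound_psi2' hK00 hcq v) x
  refine ⟨fun v => (hstep2 v).differentiableAt, fun v w => ?_⟩
  rw [(hstep2 v).fderiv]
  have hint2 : Integrable (fun y => g y • Stmt13.psi2' V⁻¹ K0 v (y - x)) :=
    Stmt13.integrable_g_smul hg hgrowth (Stmt13.cont_psi2' hMs K0 v) hc₀
      (Stmt13.bound_psi2' hK00 hcq v) x
  rw [ContinuousLinearMap.neg_apply, ContinuousLinearMap.integral_apply hint2 w,
    ← integral_neg, hφf]
  have htrans : (fun y : Fin d → ℝ => -((g y • Stmt13.psi2' V⁻¹ K0 v (y - x)) w))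
      = fun y => (fun z => g (x + z)
          * ((V⁻¹.mulVec z ⬝ᵥ v) * (V⁻¹.mulVec z ⬝ᵥ w) - v ⬝ᵥ V⁻¹.mulVec w)
          * Stmt13.phif V⁻¹ K0 z) (y - x) := by
    funext y
    show -((g y • Stmt13.psi2' V⁻¹ K0 v (y - x)) w)
      = g (x + (y - x))
          * ((V⁻¹.mulVec (y - x) ⬝ᵥ v) * (V⁻¹.mulVec (y - x) ⬝ᵥ w) - v ⬝ᵥ V⁻¹.mulVec w)
          * Stmt13.phif V⁻¹ K0 (y - x)
    have hxy : x + (y - x) = y := by abel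
    rw [hxy]
    rw [ContinuousLinearMap.smul_apply]
    unfold Stmt13.psi2'
    rw [ContinuousLinearMap.add_apply, ContinuousLinearMap.smul_apply,
      ContinuousLinearMap.smul_apply, ContinuousLinearMap.smul_apply,
      Stmt13.dotL_apply, Stmt13.dotL_apply]
    rw [show (V⁻¹.mulVec v ⬝ᵥ w) = v ⬝ᵥ V⁻¹.mulVec w from Stmt13.dot_symm hMs v w]
    simp only [smul_eq_mul]
    ring
  rw [htrans]
  exact integral_sub_right_eq_self (μ := volume) (fun z => g (x + z)
    * ((V⁻¹.mulVec z ⬝ᵥ v) * (V⁻¹.mulVec z ⬝ᵥ w) - v ⬝ᵥ V⁻¹.mulVec w)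
    * Stmt13.phif V⁻¹ K0 z) x
end
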